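/- arXiv:1404.0263 — 9 statements merged into one kernel-verified Lean document; each statement's English description precedes it below -/
import Mathlib

section
/- Let G be an abelian group and let f : G → ℂ be a generalized polynomial. Then f is a polynomial if and only if the variety τ(f) generated by f is a finite-dimensional complex vector space. -/
/-- The difference operator: `(Δ_y f)(x) = f(x+y) - f(x)`. -/
def diffOp {G : Type*} [AddCommGroup G] (y : G) (f : G → ℂ) : G → ℂ :=
  fun x => f (x + y) - f x

/-- `f` is a generalized polynomial: some iterated difference of order `n+1` always vanishes. -/
def IsGenPoly {G : Type*} [AddCommGroup G] (f : G → ℂ) : Prop :=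
  ∃ n : ℕ, ∀ ys : List G, ys.length = n + 1 → ys.foldr diffOp f = 0

/-- An additive function is a homomorphism of `G` into `(ℂ, +)`. -/
def IsAdditiveFn {G : Type*} [AddCommGroup G] (a : G → ℂ) : Prop :=
  ∀ x y : G, a (x + y) = a x + a y

/-- `f` is a polynomial: it belongs to the complex function algebra generated by the
additive functions (constants lie in every subalgebra). -/
def IsPolyFn {G : Type*} [AddCommGroup G] (f : G → ℂ) : Prop :=
  f ∈ Algebra.adjoin ℂ {a : G → ℂ | IsAdditiveFn a}

/-- The variety `τ(f)`: smallest translation-invariant linear subspace of `ℂ^G`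
containing `f` which is closed under pointwise convergence. -/
noncomputable def variety {G : Type*} [AddCommGroup G] (f : G → ℂ) :
    Submodule ℂ (G → ℂ) :=
  (Submodule.span ℂ {g : G → ℂ | ∃ y : G, g = fun x => f (x + y)}).topologicalClosure

namespace Char1

variable {G : Type*} [AddCommGroup G]

/-- Translation operator as a linear map. -/
def T (y : G) : (G → ℂ) →ₗ[ℂ] (G → ℂ) where
  toFun g := fun x => g (x + y)
  map_add' g h := rfl
  map_smul' c g := rfl

@[simp] lemma T_apply (y : G) (g : G → ℂ) (x : G) : T y g x = g (x + y) := rfl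

lemma T_T (y z : G) (g : G → ℂ) : T y (T z g) = T (y + z) g := by
  funext x; simp [add_assoc]

lemma T_zero (g : G → ℂ) : T (0 : G) g = g := by funext x; simp

/-- span of translates -/
noncomputable def spanT (f : G → ℂ) : Submodule ℂ (G → ℂ) :=
  Submodule.span ℂ {g : G → ℂ | ∃ y : G, g = fun x => f (x + y)}

lemma mem_gen (f : G → ℂ) (y : G) : T y f ∈ spanT f :=
  Submodule.subset_span ⟨y, rfl⟩

lemma self_mem_spanT (f : G → ℂ) : f ∈ spanT f := by
  have := mem_gen f 0
  rwa [T_zero] at this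

lemma variety_eq (f : G → ℂ) : variety f = (spanT f).topologicalClosure := rfl

lemma spanT_le (f : G → ℂ) {p : Submodule ℂ (G → ℂ)} (h : ∀ y, T y f ∈ p) :
    spanT f ≤ p := by
  rw [spanT, Submodule.span_le]
  rintro g ⟨y, rfl⟩
  exact h y

/-- The set of functions with finite dimensional span of translates is a subalgebra. -/
lemma fd_one : FiniteDimensional ℂ (spanT (1 : G → ℂ)) := by
  have h : spanT (1 : G → ℂ) ≤ Submodule.span ℂ {(1 : G → ℂ)} := by
    apply spanT_le
    intro y
    have : T y (1 : G → ℂ) = 1 := rfl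
    rw [this]
    exact Submodule.mem_span_singleton_self _
  exact Submodule.finiteDimensional_of_le h

lemma fd_add {g h : G → ℂ} (hg : FiniteDimensional ℂ (spanT g))
    (hh : FiniteDimensional ℂ (spanT h)) : FiniteDimensional ℂ (spanT (g + h)) := by
  have hle : spanT (g + h) ≤ spanT g ⊔ spanT h := by
    apply spanT_le
    intro y
    have : T y (g + h) = T y g + T y h := map_add _ _ _
    rw [this]
    exact Submodule.add_mem_sup (mem_gen g y) (mem_gen h y)
  exact Submodule.finiteDimensional_of_le hle

lemma fd_mul {g h : G → ℂ} (hg : FiniteDimensional ℂ (spanT g))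
    (hh : FiniteDimensional ℂ (spanT h)) : FiniteDimensional ℂ (spanT (g * h)) := by
  have hle : spanT (g * h) ≤ spanT g * spanT h := by
    apply spanT_le
    intro y
    have : T y (g * h) = T y g * T y h := rfl
    rw [this]
    exact Submodule.mul_mem_mul (mem_gen g y) (mem_gen h y)
  haveI : FiniteDimensional ℂ (spanT g * spanT h) := by
    rw [← Submodule.fg_iff_finiteDimensional] at *
    exact Submodule.FG.mul hg hh
  exact Submodule.finiteDimensional_of_le hle

lemma fd_smul (c : ℂ) {g : G → ℂ} (hg : FiniteDimensional ℂ (spanT g)) :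
    FiniteDimensional ℂ (spanT (c • g)) := by
  have hle : spanT (c • g) ≤ spanT g := by
    apply spanT_le
    intro y
    have : T y (c • g) = c • T y g := map_smul _ _ _
    rw [this]
    exact Submodule.smul_mem _ _ (mem_gen g y)
  exact Submodule.finiteDimensional_of_le hle

lemma fd_additive {a : G → ℂ} (ha : IsAdditiveFn a) :
    FiniteDimensional ℂ (spanT a) := by
  have hle : spanT a ≤ Submodule.span ℂ {a, (1 : G → ℂ)} := by
    apply spanT_le
    intro y
    have : T y a = a + a y • (1 : G → ℂ) := by
      funext x
      simp [ha x y, Pi.smul_apply]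
    rw [this]
    refine Submodule.add_mem _ ?_ ?_
    · exact Submodule.subset_span (by simp)
    · exact Submodule.smul_mem _ _ (Submodule.subset_span (by simp))
  have : FiniteDimensional ℂ (Submodule.span ℂ ({a, (1 : G → ℂ)} : Set (G → ℂ))) :=
    FiniteDimensional.span_of_finite ℂ (Set.toFinite _)
  exact Submodule.finiteDimensional_of_le hle

lemma fd_of_poly {f : G → ℂ} (hf : IsPolyFn f) : FiniteDimensional ℂ (spanT f) := by
  refine Algebra.adjoin_induction (fun a ha => fd_additive ha) ?_
    (fun g h _ _ hg hh => fd_add hg hh) (fun g h _ _ hg hh => fd_mul hg hh) hf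
  · intro c
    have : (algebraMap ℂ (G → ℂ)) c = c • (1 : G → ℂ) := by
      funext x; simp [Algebra.algebraMap_eq_smul_one]
    rw [this]
    exact fd_smul c fd_one

lemma forward {f : G → ℂ} (hf : IsPolyFn f) : FiniteDimensional ℂ (variety f) := by
  have h1 : FiniteDimensional ℂ (spanT f) := fd_of_poly hf
  have h2 : IsClosed ((spanT f : Submodule ℂ (G → ℂ)) : Set (G → ℂ)) :=
    Submodule.closed_of_finiteDimensional _
  have h3 : variety f = spanT f := by
    rw [variety_eq]
    exact le_antisymm (Submodule.topologicalClosure_minimal _ le_rfl h2)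
      (Submodule.le_topologicalClosure _)
  rw [h3]; exact h1

end Char1


open Polynomial

namespace Char1

/-- `gk k` is the binomial-coefficient polynomial `X choose k`. -/
noncomputable def gk (k : ℕ) : ℂ[X] := C ((Nat.factorial k : ℂ)⁻¹) * descPochhammer ℂ k

lemma gk_eval_nat (k m : ℕ) : (gk k).eval (m : ℂ) = (m.choose k : ℂ) := by
  have hk : (Nat.factorial k : ℂ) ≠ 0 := Nat.cast_ne_zero.2 (Nat.factorial_ne_zero k)
  rw [gk, eval_mul, eval_C, descPochhammer_eval_eq_descFactorial,
    Nat.descFactorial_eq_factorial_mul_choose]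
  push_cast
  field_simp

lemma gk_coeff_zero (k : ℕ) : (gk k).coeff 0 = if k = 0 then 1 else 0 := by
  have h := gk_eval_nat k 0
  rw [Nat.cast_zero] at h
  rw [coeff_zero_eq_eval_zero, h]
  rcases Nat.eq_zero_or_pos k with hk | hk
  · simp [hk]
  · rw [Nat.choose_eq_zero_of_lt hk]
    have : k ≠ 0 := by omega
    simp [this]

lemma gk_zero : gk 0 = 1 := by
  simp [gk, descPochhammer_zero]

lemma gk_one : gk 1 = X := by
  simp [gk, descPochhammer_one]

/-- Truncated logarithm polynomial of `1 + X` (we never need its explicit coefficients). -/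
noncomputable def logP (n : ℕ) : ℂ[X] :=
  ∑ k ∈ Finset.range (n + 1), C ((gk k).coeff 1) * X ^ k

lemma gk_zero_coeff_one : (gk 0).coeff 1 = 0 := by
  rw [gk_zero]
  simp [Polynomial.coeff_one]

lemma gk_one_coeff_one : (gk 1).coeff 1 = 1 := by
  rw [gk_one, Polynomial.coeff_X_one]

lemma logP_coeff_zero (n : ℕ) : (logP n).coeff 0 = 0 := by
  rw [logP, finset_sum_coeff]
  rw [Finset.sum_eq_single 0]
  · simp [gk_zero_coeff_one]
  · intro k _ hk
    simp only [coeff_C_mul, coeff_X_pow]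
    rw [if_neg (fun h => hk h.symm)]
    simp
  · simp

lemma logP_coeff_one (n : ℕ) (hn : 1 ≤ n) : (logP n).coeff 1 = 1 := by
  rw [logP, finset_sum_coeff]
  rw [Finset.sum_eq_single 1]
  · simp [gk_one_coeff_one]
  · intro k hk hk1
    simp only [coeff_C_mul, coeff_X_pow]
    rw [if_neg (fun h => hk1 h.symm)]
    simp
  · intro h
    simp at h
    omega

lemma aeval_logP {A : Type*} [Ring A] [Algebra ℂ A] (n : ℕ) (x : A) :
    Polynomial.aeval x (logP n) = ∑ k ∈ Finset.range (n + 1), (gk k).coeff 1 • x ^ k := by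
  rw [logP, map_sum]
  refine Finset.sum_congr rfl fun k _ => ?_
  rw [map_mul, aeval_C, map_pow, aeval_X, Algebra.smul_def]

lemma pow_eq_zero_of_ge {A : Type*} [Ring A] {x : A} {n : ℕ} (hx : x ^ (n + 1) = 0)
    {k : ℕ} (hk : n + 1 ≤ k) : x ^ k = 0 := by
  have : x ^ k = x ^ (n + 1) * x ^ (k - (n + 1)) := by
    rw [← pow_add]
    congr 1
    omega
  rw [this, hx, zero_mul]

/-- Binomial expansion for powers of a unipotent element, truncated at the nilpotency order. -/
lemma unipotent_pow {A : Type*} [Ring A] [Algebra ℂ A] {n : ℕ} {x : A}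
    (hx : x ^ (n + 1) = 0) (m : ℕ) :
    (1 + x) ^ m = ∑ k ∈ Finset.range (n + 1), (m.choose k : ℂ) • x ^ k := by
  have hc : Commute x (1 : A) := Commute.one_right x
  have h1 : (x + 1) ^ m = ∑ k ∈ Finset.range (m + 1), (m.choose k : ℂ) • x ^ k := by
    rw [hc.add_pow m]
    refine Finset.sum_congr rfl fun k _ => ?_
    rw [one_pow, mul_one, Algebra.smul_def, map_natCast]
    exact (Nat.cast_commute _ _).eq.symm
  have key : ∀ N, m + 1 ≤ N → n + 1 ≤ N →
      (∑ k ∈ Finset.range (m + 1), (m.choose k : ℂ) • x ^ k)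
      = ∑ k ∈ Finset.range (n + 1), (m.choose k : ℂ) • x ^ k := by
    intro N h1' h2'
    have e1 : (∑ k ∈ Finset.range (m + 1), (m.choose k : ℂ) • x ^ k)
        = ∑ k ∈ Finset.range N, (m.choose k : ℂ) • x ^ k := by
      refine Finset.sum_subset (Finset.range_subset_range.2 h1') fun k _ hk => ?_
      have : m < k := by simpa using hk
      rw [Nat.choose_eq_zero_of_lt this]
      simp
    have e2 : (∑ k ∈ Finset.range (n + 1), (m.choose k : ℂ) • x ^ k)
        = ∑ k ∈ Finset.range N, (m.choose k : ℂ) • x ^ k := by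
      refine Finset.sum_subset (Finset.range_subset_range.2 h2') fun k _ hk => ?_
      have : n < k := by simpa using hk
      rw [pow_eq_zero_of_ge hx (by omega)]
      simp
    rw [e1, ← e2]
  rw [add_comm (1 : A) x, h1, key (max (m + 1) (n + 1)) (le_max_left _ _) (le_max_right _ _)]

lemma poly_eq_of_nat_eval {p q : ℂ[X]} (h : ∀ m : ℕ, p.eval (m : ℂ) = q.eval (m : ℂ)) :
    p = q := by
  apply Polynomial.eq_of_infinite_eval_eq
  apply Set.infinite_of_injective_forall_mem (f := (Nat.cast : ℕ → ℂ))
  · exact Nat.cast_injective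
  · intro m
    exact h m

lemma coeff_mul_one' (p q : ℂ[X]) :
    (p * q).coeff 1 = p.coeff 0 * q.coeff 1 + p.coeff 1 * q.coeff 0 := by
  rw [coeff_mul, Finset.Nat.sum_antidiagonal_eq_sum_range_succ_mk]
  simp [Finset.sum_range_succ]

end Char1

namespace Char1

open Polynomial

variable {A : Type*} [Ring A] [Algebra ℂ A]

/-- Evaluation polynomial: `pp ψ x n` interpolates `m ↦ ψ ((1+x)^m)`. -/
noncomputable def pp (ψ : A →ₗ[ℂ] ℂ) (n : ℕ) (x : A) : ℂ[X] :=
  ∑ k ∈ Finset.range (n + 1), C (ψ (x ^ k)) * gk k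

lemma pp_eval (ψ : A →ₗ[ℂ] ℂ) {n : ℕ} {x : A} (hx : x ^ (n + 1) = 0) (m : ℕ) :
    (pp ψ n x).eval (m : ℂ) = ψ ((1 + x) ^ m) := by
  rw [unipotent_pow hx m, map_sum, pp, eval_finset_sum]
  refine Finset.sum_congr rfl fun k _ => ?_
  rw [eval_mul, eval_C, gk_eval_nat, map_smul, smul_eq_mul]
  exact mul_comm _ _

lemma pp_coeff_one (ψ : A →ₗ[ℂ] ℂ) (n : ℕ) (x : A) :
    (pp ψ n x).coeff 1 = ψ (Polynomial.aeval x (logP n)) := by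
  rw [aeval_logP, map_sum, pp, finset_sum_coeff]
  refine Finset.sum_congr rfl fun k _ => ?_
  rw [coeff_C_mul, map_smul, smul_eq_mul, mul_comm]

/-- Product interpolation polynomial for `m ↦ ψ ((1+a)^m (1+b)^m)`. -/
noncomputable def qq (ψ : A →ₗ[ℂ] ℂ) (n : ℕ) (a b : A) : ℂ[X] :=
  ∑ k ∈ Finset.range (n + 1), ∑ l ∈ Finset.range (n + 1),
    C (ψ (a ^ k * b ^ l)) * (gk k * gk l)

lemma qq_eval (ψ : A →ₗ[ℂ] ℂ) {n : ℕ} {a b : A}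
    (ha : a ^ (n + 1) = 0) (hb : b ^ (n + 1) = 0) (m : ℕ) :
    (qq ψ n a b).eval (m : ℂ) = ψ ((1 + a) ^ m * (1 + b) ^ m) := by
  rw [unipotent_pow ha m, unipotent_pow hb m, Finset.sum_mul_sum, map_sum, qq, eval_finset_sum]
  refine Finset.sum_congr rfl fun k _ => ?_
  rw [map_sum, eval_finset_sum]
  refine Finset.sum_congr rfl fun l _ => ?_
  rw [eval_mul, eval_C, eval_mul, gk_eval_nat, gk_eval_nat]
  rw [smul_mul_assoc, Algebra.mul_smul_comm, map_smul, map_smul]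
  rw [smul_eq_mul, smul_eq_mul]
  ring

lemma qq_coeff_one (ψ : A →ₗ[ℂ] ℂ) (n : ℕ) (a b : A) :
    (qq ψ n a b).coeff 1 =
      ψ (Polynomial.aeval a (logP n)) + ψ (Polynomial.aeval b (logP n)) := by
  have expand : (qq ψ n a b).coeff 1 =
      ∑ k ∈ Finset.range (n + 1), ∑ l ∈ Finset.range (n + 1),
        ψ (a ^ k * b ^ l) *
          ((if k = 0 then (1:ℂ) else 0) * (gk l).coeff 1
            + (gk k).coeff 1 * (if l = 0 then (1:ℂ) else 0)) := by
    rw [qq, finset_sum_coeff]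
    refine Finset.sum_congr rfl fun k _ => ?_
    rw [finset_sum_coeff]
    refine Finset.sum_congr rfl fun l _ => ?_
    rw [coeff_C_mul, coeff_mul_one', gk_coeff_zero, gk_coeff_zero]
  rw [expand]
  have h0 : (0:ℕ) ∈ Finset.range (n + 1) := by simp
  have split : ∀ k ∈ Finset.range (n+1), ∀ l ∈ Finset.range (n+1),
      ψ (a ^ k * b ^ l) *
        ((if k = 0 then (1:ℂ) else 0) * (gk l).coeff 1
          + (gk k).coeff 1 * (if l = 0 then (1:ℂ) else 0))
      = (if k = 0 then ψ (b ^ l) * (gk l).coeff 1 else 0)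
        + (if l = 0 then ψ (a ^ k) * (gk k).coeff 1 else 0) := by
    intro k _ l _
    by_cases hk : k = 0 <;> by_cases hl : l = 0 <;>
      simp [hk, hl, pow_zero, one_mul, mul_one] <;> try ring
  rw [Finset.sum_congr rfl fun k hk => Finset.sum_congr rfl fun l hl => split k hk l hl]
  have e1 : ∀ k ∈ Finset.range (n+1),
      (∑ l ∈ Finset.range (n + 1),
        ((if k = 0 then ψ (b ^ l) * (gk l).coeff 1 else 0)
          + (if l = 0 then ψ (a ^ k) * (gk k).coeff 1 else 0)))
      = (if k = 0 then ∑ l ∈ Finset.range (n+1), ψ (b ^ l) * (gk l).coeff 1 else 0)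
        + ψ (a ^ k) * (gk k).coeff 1 := by
    intro k _
    rw [Finset.sum_add_distrib]
    congr 1
    · by_cases hk : k = 0 <;> simp [hk]
    · rw [Finset.sum_ite_eq' (Finset.range (n+1)) 0 (fun _ => ψ (a ^ k) * (gk k).coeff 1)]
      simp
  rw [Finset.sum_congr rfl e1, Finset.sum_add_distrib]
  have e2 : (∑ k ∈ Finset.range (n+1), if k = 0 then
      (∑ l ∈ Finset.range (n+1), ψ (b ^ l) * (gk l).coeff 1) else 0)
      = ∑ l ∈ Finset.range (n+1), ψ (b ^ l) * (gk l).coeff 1 := by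
    rw [Finset.sum_ite_eq' (Finset.range (n+1)) 0
      (fun _ => ∑ l ∈ Finset.range (n+1), ψ (b ^ l) * (gk l).coeff 1)]
    simp
  rw [e2]
  have eb : ∑ l ∈ Finset.range (n+1), ψ (b ^ l) * (gk l).coeff 1
      = ψ (Polynomial.aeval b (logP n)) := by
    rw [aeval_logP, map_sum]
    exact Finset.sum_congr rfl fun l _ => by rw [map_smul, smul_eq_mul, mul_comm]
  have ea : ∑ k ∈ Finset.range (n+1), ψ (a ^ k) * (gk k).coeff 1
      = ψ (Polynomial.aeval a (logP n)) := by
    rw [aeval_logP, map_sum]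
    exact Finset.sum_congr rfl fun k _ => by rw [map_smul, smul_eq_mul, mul_comm]
  rw [eb, ea, add_comm]

/-- Key additivity: the truncated logarithm is additive on commuting nilpotents. -/
lemma log_add {n : ℕ} {a b : A} (hab : Commute a b)
    (ha : a ^ (n + 1) = 0) (hb : b ^ (n + 1) = 0)
    (hc : (a + b + a * b) ^ (n + 1) = 0) :
    Polynomial.aeval (a + b + a * b) (logP n)
      = Polynomial.aeval a (logP n) + Polynomial.aeval b (logP n) := by
  rw [← sub_eq_zero, ← Module.forall_dual_apply_eq_zero_iff ℂ]
  intro ψ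
  rw [map_sub, map_add, sub_eq_zero]
  have hq : pp ψ n (a + b + a * b) = qq ψ n a b := by
    apply poly_eq_of_nat_eval
    intro m
    rw [pp_eval ψ hc m, qq_eval ψ ha hb m]
    congr 1
    rw [← Commute.mul_pow (by
      have : Commute (1 + a) (1 + b) := (Commute.one_left _).add_left
        ((Commute.one_right a).add_right hab)
      exact this)]
    congr 1
    noncomm_ring
  have := congrArg (fun p => p.coeff 1) hq
  simpa [pp_coeff_one, qq_coeff_one] using this

end Char1

namespace Char1

open Polynomial

/-- Compositional inversion of a power series `P = X + O(X²)`, to order `n`. -/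
lemma exists_inv (n : ℕ) (P : ℂ[X]) (h0 : P.coeff 0 = 0) (h1 : P.coeff 1 = 1) :
    ∃ E : ℂ[X], (X : ℂ[X]) ^ (n + 1) ∣ (X - E.comp P) := by
  have hXP : X * P.divX = P := by
    have := X_mul_divX_add P
    rwa [h0, map_zero, add_zero] at this
  have hQ0 : P.divX.coeff 0 = 1 := by rw [coeff_divX, h1]
  induction n with
  | zero =>
    refine ⟨X, ?_⟩
    rw [pow_one, X_dvd_iff, X_comp]
    simp [h0]
  | succ n ih =>
    obtain ⟨E, t, ht⟩ := ih
    set α := t.coeff 0 with hα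
    refine ⟨E + C α * X ^ (n + 1), ?_⟩
    have hcomp : (E + C α * X ^ (n + 1)).comp P = E.comp P + C α * P ^ (n + 1) := by
      rw [add_comp, mul_comp, C_comp, X_pow_comp]
    rw [hcomp]
    have key : X - (E.comp P + C α * P ^ (n + 1))
        = X ^ (n + 1) * (t - C α * P.divX ^ (n + 1)) := by
      have hP : P ^ (n + 1) = X ^ (n + 1) * P.divX ^ (n + 1) := by
        rw [← mul_pow, hXP]
      rw [mul_sub, ← ht, hP]
      ring
    rw [key]
    have hdvd : (X : ℂ[X]) ∣ (t - C α * P.divX ^ (n + 1)) := by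
      rw [X_dvd_iff, coeff_sub, coeff_C_mul]
      have e1 : (P.divX ^ (n + 1)).coeff 0 = 1 := by
        rw [coeff_zero_eq_eval_zero, eval_pow, ← coeff_zero_eq_eval_zero, hQ0, one_pow]
      rw [e1, mul_one, hα, sub_self]
    obtain ⟨s, hs⟩ := hdvd
    refine ⟨s, ?_⟩
    rw [hs, pow_succ]
    ring

end Char1

namespace Char1

open Polynomial

variable {G : Type*} [AddCommGroup G]

/-- Difference operator as a linear endomorphism. -/
noncomputable def Dop (y : G) : (G → ℂ) →ₗ[ℂ] (G → ℂ) := T y - LinearMap.id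

lemma Dop_apply (y : G) (g : G → ℂ) : Dop y g = diffOp y g := rfl

lemma foldr_eq_prod (ys : List G) (g : G → ℂ) :
    ys.foldr diffOp g = (ys.map Dop).prod g := by
  induction ys with
  | nil => simp
  | cons y t ih =>
    rw [List.foldr_cons, List.map_cons, List.prod_cons, ih]
    rfl

lemma unit_expand {A : Type*} [Ring A] (u v : A) :
    u * v - 1 = (u - 1) + (v - 1) + (u - 1) * (v - 1) := by noncomm_ring

lemma T_comm (y z : G) : T y * T z = T z * T y := by
  refine LinearMap.ext fun g => ?_
  show T y (T z g) = T z (T y g)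
  rw [T_T, T_T, add_comm]

lemma Dop_comm_T (y z : G) : Commute (T z) (Dop y) := by
  have hD : Dop y = T y - 1 := rfl
  rw [hD]
  exact (show Commute (T z) (T y) from T_comm z y).sub_right (Commute.one_right _)

lemma prod_apply_translate (ys : List G) (z : G) (g : G → ℂ) :
    (ys.map Dop).prod (T z g) = T z ((ys.map Dop).prod g) := by
  have hcomm : Commute (T z) ((ys.map Dop).prod) := by
    apply Commute.list_prod_right
    intro b hb
    obtain ⟨y, _, rfl⟩ := List.mem_map.1 hb
    exact Dop_comm_T y z
  show ((ys.map Dop).prod * T z) g = (T z * (ys.map Dop).prod) g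
  rw [hcomm.eq]

lemma foldr_zero_of_mem_spanT {f : G → ℂ} {n : ℕ}
    (hgen : ∀ ys : List G, ys.length = n + 1 → ys.foldr diffOp f = 0)
    (ys : List G) (hys : ys.length = n + 1) {g : G → ℂ} (hg : g ∈ spanT f) :
    (ys.map Dop).prod g = 0 := by
  have hle : spanT f ≤ LinearMap.ker ((ys.map Dop).prod) := by
    apply spanT_le
    intro z
    rw [LinearMap.mem_ker]
    have : (T z f : G → ℂ) = T z f := rfl
    rw [prod_apply_translate, ← foldr_eq_prod, hgen ys hys, map_zero]
  exact LinearMap.mem_ker.1 (hle hg)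

lemma pow_apply_mem {V : Submodule ℂ (G → ℂ)} [FiniteDimensional ℂ V]
    (L : G → Module.End ℂ V) (hL : ∀ y z, L (y + z) = L y + L z) (v : V) :
    ∀ (j : ℕ) (ψ : V →ₗ[ℂ] ℂ),
      (fun y => ψ ((L y ^ j) v)) ∈ Algebra.adjoin ℂ {a : G → ℂ | IsAdditiveFn a} := by
  intro j
  induction j with
  | zero =>
    intro ψ
    have h : (fun y : G => ψ ((L y ^ 0) v)) = algebraMap ℂ (G → ℂ) (ψ v) := by
      funext y
      rw [pow_zero]
      rfl
    rw [h]
    exact Subalgebra.algebraMap_mem _ _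
  | succ j ih =>
    intro ψ
    set b := Module.finBasis ℂ V with hb
    have key : (fun y => ψ ((L y ^ (j + 1)) v))
        = ∑ i ∈ Finset.univ, (fun y => (b.coord i) ((L y ^ j) v)) * (fun y => ψ (L y (b i))) := by
      funext y
      rw [Finset.sum_apply]
      have h1 : (L y ^ (j + 1)) v = L y ((L y ^ j) v) := by
        rw [pow_succ']
        rfl
      rw [h1]
      set w := (L y ^ j) v with hw
      conv_lhs => rw [← b.sum_repr w]
      rw [map_sum, map_sum]
      refine Finset.sum_congr rfl fun i _ => ?_
      rw [map_smul, map_smul, smul_eq_mul, Pi.mul_apply]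
      rfl
    rw [key]
    apply Subalgebra.sum_mem
    intro i _
    refine mul_mem (ih (b.coord i)) (Algebra.subset_adjoin ?_)
    intro x y
    show ψ (L (x + y) (b i)) = _
    rw [hL x y]
    simp [LinearMap.add_apply]

set_option maxHeartbeats 1000000 in
lemma reverse {f : G → ℂ} (n : ℕ) (hn : 1 ≤ n)
    (hgen : ∀ ys : List G, ys.length = n + 1 → ys.foldr diffOp f = 0)
    (hfd : FiniteDimensional ℂ (spanT f)) : IsPolyFn f := by
  haveI := hfd
  have hmaps : ∀ y : G, ∀ v ∈ spanT f, T y v ∈ spanT f := by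
    intro y
    have hle : spanT f ≤ Submodule.comap (T y) (spanT f) := by
      apply spanT_le
      intro z
      rw [Submodule.mem_comap]
      have h : T y (T z f) = T (z + y) f := by rw [T_T, add_comm]
      rw [h]
      exact mem_gen f (z + y)
    exact fun v hv => hle hv
  set V := spanT f with hV
  have hmapsN : ∀ y : G, ∀ v ∈ V, Dop y v ∈ V := by
    intro y v hv
    have h : Dop y v = T y v - v := rfl
    rw [h]
    exact sub_mem (hmaps y v hv) hv
  set S : G → Module.End ℂ V := fun y => (T y).restrict (hmaps y) with hSdef
  set N : G → Module.End ℂ V := fun y => (Dop y).restrict (hmapsN y) with hNdef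
  have hScoe : ∀ (y : G) (v : V), ((S y v : V) : G → ℂ) = T y (v : G → ℂ) := fun y v => rfl
  have hNcoe : ∀ (y : G) (v : V), ((N y v : V) : G → ℂ)
      = T y (v : G → ℂ) - (v : G → ℂ) := fun y v => rfl
  have hSmul : ∀ y z, S y * S z = S (y + z) := by
    intro y z
    refine LinearMap.ext fun v => Subtype.ext ?_
    show ((S y (S z v) : V) : G → ℂ) = ((S (y + z) v : V) : G → ℂ)
    rw [hScoe, hScoe, hScoe, T_T]
  have hSN : ∀ y, S y = 1 + N y := by
    intro y
    refine LinearMap.ext fun v => Subtype.ext ?_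
    have h3 : (((1 + N y) v : V) : G → ℂ)
        = (v : G → ℂ) + (T y (v : G → ℂ) - (v : G → ℂ)) := rfl
    rw [h3, hScoe]
    abel
  have hNpowcoe : ∀ (y : G) (k : ℕ) (v : V), (((N y ^ k) v : V) : G → ℂ)
      = (List.replicate k y).foldr diffOp (v : G → ℂ) := by
    intro y k
    induction k with
    | zero => intro v; rw [pow_zero]; rfl
    | succ k ih =>
      intro v
      rw [pow_succ']
      show ((N y ((N y ^ k) v) : V) : G → ℂ) = _
      rw [hNcoe, ih v, List.replicate_succ, List.foldr_cons]
      rfl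
  have hNpow : ∀ y, N y ^ (n + 1) = 0 := by
    intro y
    refine LinearMap.ext fun v => Subtype.ext ?_
    rw [hNpowcoe]
    have hlen : (List.replicate (n + 1) y).length = n + 1 := List.length_replicate
    rw [foldr_eq_prod, foldr_zero_of_mem_spanT hgen _ hlen v.2]
    rfl
  have hNadd : ∀ y z, N (y + z) = N y + N z + N y * N z := by
    intro y z
    refine LinearMap.ext fun v => Subtype.ext ?_
    have e1 : ((N (y + z) v : V) : G → ℂ) = T (y + z) (v : G → ℂ) - (v : G → ℂ) := rfl
    have e2 : (((N y + N z + N y * N z) v : V) : G → ℂ)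
        = (T y (v : G → ℂ) - (v : G → ℂ)) + (T z (v : G → ℂ) - (v : G → ℂ))
          + (T y (T z (v : G → ℂ) - (v : G → ℂ)) - (T z (v : G → ℂ) - (v : G → ℂ))) := rfl
    rw [e1, e2, map_sub, T_T]
    abel
  have hNcomm : ∀ y z, Commute (N y) (N z) := by
    intro y z
    show N y * N z = N z * N y
    refine LinearMap.ext fun v => Subtype.ext ?_
    have e1 : (((N y * N z) v : V) : G → ℂ)
        = T y (T z (v : G → ℂ) - (v : G → ℂ)) - (T z (v : G → ℂ) - (v : G → ℂ)) := rfl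
    have e2 : (((N z * N y) v : V) : G → ℂ)
        = T z (T y (v : G → ℂ) - (v : G → ℂ)) - (T y (v : G → ℂ) - (v : G → ℂ)) := rfl
    rw [e1, e2, map_sub, map_sub, T_T, T_T, add_comm z y]
    abel
  set L : G → Module.End ℂ V := fun y => Polynomial.aeval (N y) (logP n) with hL
  have hLadd : ∀ y z, L (y + z) = L y + L z := by
    intro y z
    show Polynomial.aeval (N (y + z)) (logP n) = _
    rw [hNadd y z]
    exact log_add (A := Module.End ℂ V) (n := n) (a := N y) (b := N z) (hNcomm y z)
      (hNpow y) (hNpow z) (by rw [← hNadd y z]; exact hNpow (y + z))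
  obtain ⟨E, r, hr⟩ := exists_inv n (logP n) (logP_coeff_zero n) (logP_coeff_one n hn)
  have hNE : ∀ y, N y = Polynomial.aeval (L y) E := by
    intro y
    have h := congrArg (Polynomial.aeval (N y)) hr
    rw [map_sub, map_mul, map_pow, aeval_X, aeval_comp, hNpow y, zero_mul, sub_eq_zero] at h
    exact h
  have hfV : f ∈ V := self_mem_spanT f
  set vf : V := ⟨f, hfV⟩ with hvf
  set ev0 : V →ₗ[ℂ] ℂ := (LinearMap.proj (0 : G)).comp V.subtype with hev0
  have hfeval : ∀ y, f y = ev0 (S y vf) := by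
    intro y
    show f y = (T y f) 0
    rw [T_apply, zero_add]
  have hfS : ∀ y, ev0 (S y vf) = ev0 vf + ∑ j ∈ Finset.range (E.natDegree + 1),
      E.coeff j * ev0 ((L y ^ j) vf) := by
    intro y
    have h1 : S y = 1 + Polynomial.aeval (L y) E := by
      rw [hSN y, hNE y]
    rw [h1, Polynomial.aeval_eq_sum_range, LinearMap.add_apply, Module.End.one_apply, map_add]
    congr 1
    rw [LinearMap.sum_apply, map_sum]
    refine Finset.sum_congr rfl fun j _ => ?_
    rw [LinearMap.smul_apply, map_smul, smul_eq_mul]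
  have hrepr : f = algebraMap ℂ (G → ℂ) (ev0 vf) + ∑ j ∈ Finset.range (E.natDegree + 1),
      algebraMap ℂ (G → ℂ) (E.coeff j) * (fun y => ev0 ((L y ^ j) vf)) := by
    funext y
    rw [hfeval y, hfS y]
    have hsum : (∑ j ∈ Finset.range (E.natDegree + 1),
        algebraMap ℂ (G → ℂ) (E.coeff j) * (fun y => ev0 ((L y ^ j) vf))) y
        = ∑ j ∈ Finset.range (E.natDegree + 1), E.coeff j * ev0 ((L y ^ j) vf) := by
      rw [Finset.sum_apply]
      exact Finset.sum_congr rfl fun j _ => rfl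
    rw [Pi.add_apply, hsum]
    rfl
  rw [IsPolyFn, hrepr]
  refine Subalgebra.add_mem _ (Subalgebra.algebraMap_mem _ _) (Subalgebra.sum_mem _ ?_)
  intro j _
  exact mul_mem (Subalgebra.algebraMap_mem _ _) (pow_apply_mem L hLadd vf j ev0)

end Char1

/-- Theorem 1 (char1): a generalized polynomial is a polynomial if and only if its
variety is a finite-dimensional complex vector space. -/
theorem genPoly_isPoly_iff_finiteDimensional_variety
    {G : Type*} [AddCommGroup G] (f : G → ℂ) (hf : IsGenPoly f) :
    IsPolyFn f ↔ FiniteDimensional ℂ ↥(variety f) := by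
  obtain ⟨m, hm⟩ := hf
  have hgen : ∀ ys : List G, ys.length = (m + 1) + 1 → ys.foldr diffOp f = 0 := by
    intro ys hys
    cases ys with
    | nil => simp at hys
    | cons y t =>
      have ht : t.length = m + 1 := by simpa using hys
      show diffOp y (t.foldr diffOp f) = 0
      rw [hm t ht]
      funext x
      simp [diffOp]
  constructor
  · exact fun h => Char1.forward h
  · intro h
    haveI := h
    have hle : Char1.spanT f ≤ variety f := by
      rw [Char1.variety_eq]
      exact Submodule.le_topologicalClosure _
    have hfd : FiniteDimensional ℂ (Char1.spanT f) :=
      Submodule.finiteDimensional_of_le (S₂ := variety f) hle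
    exact Char1.reverse (m + 1) (by omega) hgen hfd
end

section
/- Let G be a finitely generated abelian group. Then every generalized polynomial f : G → ℂ is a polynomial. -/
open Finset
open scoped DirectSum

section Basics
variable {G : Type*} [AddCommGroup G] {G' : Type*} [AddCommGroup G']

lemma diffOp_zero (y : G) : diffOp y (0 : G → ℂ) = 0 := by
  funext x; simp [diffOp]

lemma foldr_diffOp_zero (l : List G) : l.foldr diffOp (0 : G → ℂ) = 0 := by
  induction l with
  | nil => rfl
  | cons a l ih => simp only [List.foldr_cons, ih, diffOp_zero]

lemma genPoly_long {f : G → ℂ} {n : ℕ}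
    (hf : ∀ ys : List G, ys.length = n + 1 → ys.foldr diffOp f = 0)
    {l : List G} (hl : n + 1 ≤ l.length) : l.foldr diffOp f = 0 := by
  have h := List.take_append_drop (l.length - (n+1)) l
  have hdrop : (l.drop (l.length - (n+1))).length = n + 1 := by
    rw [List.length_drop]; omega
  calc l.foldr diffOp f
      = ((l.take (l.length - (n+1))) ++ (l.drop (l.length - (n+1)))).foldr diffOp f := by rw [h]
    _ = (l.take (l.length - (n+1))).foldr diffOp ((l.drop (l.length - (n+1))).foldr diffOp f) :=
        List.foldr_append
    _ = 0 := by rw [hf _ hdrop, foldr_diffOp_zero]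

lemma foldr_diffOp_comp (φ : G' →+ G) (f : G → ℂ) (ys : List G') :
    ys.foldr diffOp (f ∘ φ) = (ys.map φ).foldr diffOp f ∘ φ := by
  induction ys with
  | nil => rfl
  | cons a ys ih =>
      funext x
      simp only [List.foldr_cons, List.map_cons, diffOp, ih, Function.comp_apply, map_add]

lemma isGenPoly_comp (φ : G' →+ G) {f : G → ℂ} (hf : IsGenPoly f) :
    IsGenPoly (f ∘ φ) := by
  obtain ⟨n, hn⟩ := hf
  refine ⟨n, fun ys hys => ?_⟩
  rw [foldr_diffOp_comp]
  rw [hn (ys.map φ) (by simp [hys])]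
  rfl

lemma isPolyFn_comp (φ : G' →+ G) {f : G → ℂ} (hf : IsPolyFn f) :
    IsPolyFn (f ∘ φ) := by
  let ψ : (G → ℂ) →ₐ[ℂ] (G' → ℂ) :=
    { toFun := fun g => g ∘ φ,
      map_one' := rfl, map_mul' := fun _ _ => rfl,
      map_zero' := rfl, map_add' := fun _ _ => rfl,
      commutes' := fun _ => rfl }
  have h1 : ψ f ∈ (Algebra.adjoin ℂ {a : G → ℂ | IsAdditiveFn a}).map ψ := ⟨f, hf, rfl⟩
  rw [AlgHom.map_adjoin] at h1
  refine Algebra.adjoin_mono ?_ h1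
  rintro g ⟨a, ha, rfl⟩
  intro x y
  simp only [ψ, AlgHom.coe_mk, RingHom.coe_mk, MonoidHom.coe_mk, OneHom.coe_mk,
    Function.comp_apply, map_add]
  exact (show a (φ (x + y)) = a (φ x) + a (φ y) by rw [map_add]; exact ha _ _)

end Basics

noncomputable def bin (m : ℤ) (j : ℕ) : ℂ :=
  (∏ i ∈ Finset.range j, ((m : ℂ) - i)) / (j.factorial : ℂ)

lemma bin_zero_right (m : ℤ) : bin m 0 = 1 := by simp [bin]

lemma bin_zero_left (j : ℕ) : bin 0 (j+1) = 0 := by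
  unfold bin
  rw [Finset.prod_eq_zero (Finset.mem_range.mpr (Nat.succ_pos j))]
  · simp
  · simp

lemma bin_pascal (m : ℤ) (j : ℕ) : bin (m+1) (j+1) - bin m (j+1) = bin m j := by
  unfold bin
  have h1 : (∏ i ∈ range (j+1), (((m+1 : ℤ) : ℂ) - i))
      = ((m:ℂ)+1) * ∏ i ∈ range j, ((m:ℂ) - i) := by
    rw [Finset.prod_range_succ']
    have : ∀ i ∈ range j, (((m+1 : ℤ) : ℂ) - ((i+1 : ℕ) : ℂ)) = ((m:ℂ) - i) := by
      intro i _; push_cast; ring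
    rw [Finset.prod_congr rfl this]
    push_cast; ring
  have h2 : (∏ i ∈ range (j+1), ((m:ℂ) - i))
      = (∏ i ∈ range j, ((m:ℂ) - i)) * ((m:ℂ) - j) := Finset.prod_range_succ _ _
  have hj : ((j.factorial : ℂ)) ≠ 0 := by
    exact_mod_cast Nat.cast_ne_zero.mpr (Nat.factorial_ne_zero j)
  rw [div_sub_div_same, h1, h2, Nat.factorial_succ]
  push_cast
  field_simp
  ring

section Newton
variable {G : Type*} [AddCommGroup G]

lemma shift_eq_of_diffOp_eq_zero {y : G} {f : G → ℂ} (h : diffOp y f = 0)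
    (z : G) : f (z + y) = f z := by
  have := congrFun h z
  simpa [diffOp, sub_eq_zero] using this

lemma const_of_diffOp_eq_zero {y : G} {f : G → ℂ} (h : diffOp y f = 0)
    (x : G) : ∀ m : ℤ, f (x + m • y) = f x := by
  intro m
  induction m using Int.induction_on with
  | zero => simp
  | succ i ih =>
      have : x + ((i : ℤ) + 1) • y = (x + (i : ℤ) • y) + y := by
        rw [add_smul, one_smul, add_assoc]
      rw [this, shift_eq_of_diffOp_eq_zero h, ih]
  | pred i ih =>
      have hh : x + (-(i : ℤ)) • y = (x + (-(i:ℤ) - 1) • y) + y := by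
        rw [sub_smul, one_smul, sub_eq_add_neg, add_assoc]
        congr 1
        abel
      rw [hh, shift_eq_of_diffOp_eq_zero h] at ih
      exact ih

lemma int_ext {F G : ℤ → ℂ} (h0 : F 0 = G 0)
    (hs : ∀ m : ℤ, F (m+1) - F m = G (m+1) - G m) : ∀ m, F m = G m := by
  intro m
  induction m using Int.induction_on with
  | zero => exact h0
  | succ i ih => have := hs i; linear_combination this + ih
  | pred i ih =>
      have := hs (-(i:ℤ) - 1)
      simp only [sub_add_cancel] at this
      linear_combination ih - this

lemma newton (y : G) : ∀ (n : ℕ) (f : G → ℂ),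
    (List.replicate (n+1) y).foldr diffOp f = 0 →
    ∀ x (m : ℤ), f (x + m • y) =
      ∑ j ∈ range (n+1), bin m j * (List.replicate j y).foldr diffOp f x := by
  intro n
  induction n with
  | zero =>
      intro f hf x m
      have h1 : diffOp y f = 0 := by simpa using hf
      rw [Finset.sum_range_one, bin_zero_right, one_mul]
      exact const_of_diffOp_eq_zero h1 x m
  | succ n ih =>
      intro f hf x m
      have hrepl : ∀ k : ℕ, List.replicate (k+1) y = List.replicate k y ++ [y] :=
        fun k => List.replicate_succ' (n := k) (a := y)
      have hg : (List.replicate (n+1) y).foldr diffOp (diffOp y f) = 0 := by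
        have h' := hf
        rw [hrepl (n+1), List.foldr_append] at h'
        simpa using h'
      have IH := ih (diffOp y f) hg x
      refine int_ext (F := fun m : ℤ => f (x + m • y))
        (G := fun m : ℤ => ∑ j ∈ range (n+2), bin m j * (List.replicate j y).foldr diffOp f x)
        ?_ ?_ m
      · show f (x + (0:ℤ) • y) = ∑ j ∈ range (n+2), bin 0 j * (List.replicate j y).foldr diffOp f x
        rw [zero_smul, add_zero, Finset.sum_range_succ']
        simp only [bin_zero_left, zero_mul, Finset.sum_const_zero, zero_add,
          bin_zero_right, one_mul, List.replicate, List.foldr_nil]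
      · intro k
        show f (x + (k+1) • y) - f (x + k • y)
          = (∑ j ∈ range (n+2), bin (k+1) j * (List.replicate j y).foldr diffOp f x)
            - ∑ j ∈ range (n+2), bin k j * (List.replicate j y).foldr diffOp f x
        have hL : f (x + (k+1) • y) - f (x + k • y) = (diffOp y f) (x + k • y) := by
          simp only [diffOp]
          congr 2
          rw [add_smul, one_smul, add_assoc]
        rw [hL, IH k]
        rw [← Finset.sum_sub_distrib]
        conv_rhs => rw [Finset.sum_range_succ']
        simp only [bin_zero_right, one_mul, sub_self, add_zero]
        refine Finset.sum_congr rfl ?_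
        intro j _
        have hc : (List.replicate j y).foldr diffOp (diffOp y f)
            = (List.replicate (j+1) y).foldr diffOp f := by
          rw [hrepl j, List.foldr_append]; rfl
        rw [hc, ← bin_pascal k j]
        ring

lemma diffOp_eq_zero_of_torsion (y : G) (q : ℕ) (hq : 0 < q) (hy : q • y = 0) :
    ∀ (n : ℕ) (f : G → ℂ), (List.replicate (n+1) y).foldr diffOp f = 0 →
      diffOp y f = 0 := by
  intro n
  induction n with
  | zero => intro f hf; simpa using hf
  | succ n ih =>
      intro f hf
      have hg : (List.replicate (n+1) y).foldr diffOp (diffOp y f) = 0 := by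
        have h' := hf
        rw [List.replicate_succ' (n := n+1) (a := y), List.foldr_append] at h'
        simpa using h'
      have h2 : diffOp y (diffOp y f) = 0 := ih _ hg
      have tele : ∀ x : G, ∀ k : ℕ, f (x + k • y) = f x + k * diffOp y f x := by
        intro x k
        induction k with
        | zero => simp
        | succ k ihk =>
            have hstep : x + (k+1) • y = (x + k • y) + y := by
              rw [add_smul, one_smul, add_assoc]
            have hdy : f ((x + k • y) + y) = f (x + k • y) + diffOp y f (x + k • y) := by
              simp only [diffOp]; ring
            have hper : diffOp y f (x + k • y) = diffOp y f x := by
              have h3 := const_of_diffOp_eq_zero h2 x (k : ℤ)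
              rwa [natCast_zsmul] at h3
            rw [hstep, hdy, ihk, hper]
            push_cast; ring
      funext x
      have h4 := tele x q
      rw [hy, add_zero] at h4
      have hq' : (q : ℂ) ≠ 0 := Nat.cast_ne_zero.mpr hq.ne'
      have h5 : (q : ℂ) * diffOp y f x = 0 := by linear_combination -h4
      have := (mul_eq_zero.mp h5).resolve_left hq'
      simpa using this

end Newton

section FreeCase

lemma binFn_mem {r : ℕ} (i : Fin r) (j : ℕ) :
    (fun x : Fin r → ℤ => bin (x i) j)
      ∈ Algebra.adjoin ℂ {a : (Fin r → ℤ) → ℂ | IsAdditiveFn a} := by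
  have hA : (fun x : Fin r → ℤ => ((x i : ℤ) : ℂ))
      ∈ Algebra.adjoin ℂ {a : (Fin r → ℤ) → ℂ | IsAdditiveFn a} := by
    apply Algebra.subset_adjoin
    intro a b
    simp only [Pi.add_apply]
    push_cast
    ring
  have hEq : (fun x : Fin r → ℤ => bin (x i) j)
      = (Nat.factorial j : ℂ)⁻¹ •
        ∏ k ∈ range j, ((fun x : Fin r → ℤ => ((x i : ℤ) : ℂ)) - (fun _ => (k : ℂ))) := by
    funext x
    simp only [Pi.smul_apply, Finset.prod_apply, Pi.sub_apply, smul_eq_mul]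
    rw [bin, div_eq_mul_inv, mul_comm]
  rw [hEq]
  refine Subalgebra.smul_mem _ ?_ _
  refine Subalgebra.prod_mem _ ?_
  intro k _
  refine Subalgebra.sub_mem _ hA ?_
  exact Subalgebra.algebraMap_mem _ (k : ℂ)

/-- `Fin.cons 0` as an additive homomorphism. -/
def consHom (r : ℕ) : (Fin r → ℤ) →+ (Fin (r+1) → ℤ) where
  toFun z := Fin.cons 0 z
  map_zero' := by
    funext i
    refine Fin.cases ?_ ?_ i <;> simp
  map_add' a b := by
    funext i
    refine Fin.cases ?_ ?_ i <;> simp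

/-- `Fin.tail` as an additive homomorphism. -/
def tailHom (r : ℕ) : (Fin (r+1) → ℤ) →+ (Fin r → ℤ) where
  toFun := Fin.tail
  map_zero' := rfl
  map_add' _ _ := rfl

theorem freeCase : ∀ (r : ℕ) (f : (Fin r → ℤ) → ℂ), IsGenPoly f → IsPolyFn f := by
  intro r
  induction r with
  | zero =>
      intro f hf
      have hconst : f = algebraMap ℂ ((Fin 0 → ℤ) → ℂ) (f 0) := by
        funext x
        have hx : x = 0 := Subsingleton.elim x 0
        rw [hx]; rfl
      show f ∈ _
      rw [hconst]
      exact Subalgebra.algebraMap_mem _ _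
  | succ r ih =>
      intro f hf
      obtain ⟨n, hn⟩ := hf
      set e0 : Fin (r+1) → ℤ := Pi.single 0 1 with he0
      have hNewton := newton e0 n f (hn _ (by simp))
      have key : f = ∑ j ∈ range (n+1),
          (fun x : Fin (r+1) → ℤ => bin (x 0) j) *
          (fun x : Fin (r+1) → ℤ =>
            (List.replicate j e0).foldr diffOp f (Fin.cons (0:ℤ) (Fin.tail x))) := by
        funext x
        have hx : x = Fin.cons (0:ℤ) (Fin.tail x) + (x 0) • e0 := by
          funext i
          refine Fin.cases ?_ ?_ i
          · simp [he0]
          · intro k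
            simp [he0, Pi.single_eq_of_ne (Fin.succ_ne_zero k), Fin.tail]
        conv_lhs => rw [hx]
        rw [hNewton (Fin.cons (0:ℤ) (Fin.tail x)) (x 0), Finset.sum_apply]
        exact Finset.sum_congr rfl fun j _ => rfl
      show f ∈ _
      rw [key]
      apply Subalgebra.sum_mem
      intro j _
      apply Subalgebra.mul_mem
      · exact binFn_mem 0 j
      · have hgj : IsGenPoly ((List.replicate j e0).foldr diffOp f) := by
          refine ⟨n, fun ys hys => ?_⟩
          rw [← List.foldr_append]
          apply genPoly_long hn
          simp [hys]
        have hgen : IsGenPoly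
            (((List.replicate j e0).foldr diffOp f) ∘ (consHom r)) :=
          isGenPoly_comp (consHom r) hgj
        have hpoly := ih _ hgen
        have := isPolyFn_comp (tailHom r) hpoly
        exact this

end FreeCase

/-- On a finitely generated abelian group, every generalized polynomial is a
polynomial. -/
theorem genPoly_isPoly_of_fg
    {G : Type*} [AddCommGroup G] [AddGroup.FG G]
    (f : G → ℂ) (hf : IsGenPoly f) : IsPolyFn f := by
  obtain ⟨n, ι, fι, p, hp, e, ⟨eqv⟩⟩ := AddCommGroup.equiv_free_prod_directSum_zmod G
  let f₁ : (Fin n →₀ ℤ) × (⨁ i : ι, ZMod (p i ^ e i)) → ℂ := f ∘ eqv.symm.toAddMonoidHom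
  have hf₁ : IsGenPoly f₁ := isGenPoly_comp eqv.symm.toAddMonoidHom hf
  obtain ⟨N, hN⟩ := hf₁
  have hkill : ∀ t : ⨁ i : ι, ZMod (p i ^ e i),
      diffOp ((0 : Fin n →₀ ℤ), t) f₁ = 0 := by
    intro t
    set q : ℕ := ∏ i : ι, p i ^ e i with hqdef
    have hq : 0 < q := Finset.prod_pos fun i _ => pow_pos (hp i).pos _
    have hqt : q • t = 0 := by
      apply DFinsupp.ext
      intro i
      have h1 : (q • t) i = q • (t i) :=
        map_nsmul (DFinsupp.evalAddMonoidHom i) q t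
      rw [h1]
      have hdvd : (p i ^ e i) ∣ q := Finset.dvd_prod_of_mem _ (Finset.mem_univ i)
      haveI : NeZero (p i ^ e i) := ⟨pow_ne_zero _ (hp i).pos.ne'⟩
      have : ((q : ℕ) : ZMod (p i ^ e i)) = 0 :=
        (ZMod.natCast_eq_zero_iff _ _).mpr hdvd
      rw [nsmul_eq_mul, this, zero_mul]
      simp
    have hqy : q • ((0 : Fin n →₀ ℤ), t) = ((0 : Fin n →₀ ℤ), (0 : ⨁ i : ι, ZMod (p i ^ e i))) := by
      rw [Prod.smul_mk, smul_zero, hqt]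
    exact diffOp_eq_zero_of_torsion _ q hq (by rw [hqy]; rfl) N f₁ (hN _ (by simp))
  have hsplit : ∀ (x : Fin n →₀ ℤ) (t : ⨁ i : ι, ZMod (p i ^ e i)),
      f₁ (x, t) = f₁ (x, 0) := by
    intro x t
    have h := shift_eq_of_diffOp_eq_zero (hkill t) (x, 0)
    simpa using h
  let f₂ : (Fin n →₀ ℤ) → ℂ := fun x => f₁ (x, 0)
  have hf₂ : IsGenPoly f₂ := by
    have h := isGenPoly_comp
      (AddMonoidHom.inl (Fin n →₀ ℤ) (⨁ i : ι, ZMod (p i ^ e i)))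
      (⟨N, hN⟩ : IsGenPoly f₁)
    have heq2 : f₂ = f₁ ∘ (AddMonoidHom.inl (Fin n →₀ ℤ) (⨁ i : ι, ZMod (p i ^ e i))) := by
      funext x; rfl
    rw [heq2]; exact h
  let eqF : (Fin n → ℤ) ≃+ (Fin n →₀ ℤ) := Finsupp.addEquivFunOnFinite.symm
  have hf₃ : IsGenPoly (f₂ ∘ eqF.toAddMonoidHom) := isGenPoly_comp _ hf₂
  have hp₃ : IsPolyFn (f₂ ∘ eqF.toAddMonoidHom) := freeCase n _ hf₃
  have hp₂ : IsPolyFn f₂ := by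
    have h := isPolyFn_comp eqF.symm.toAddMonoidHom hp₃
    have heq : f₂ = (f₂ ∘ eqF.toAddMonoidHom) ∘ eqF.symm.toAddMonoidHom := by
      funext z
      simp
    rw [heq]
    exact h
  have hp₁ : IsPolyFn f₁ := by
    have heq : f₁ = f₂ ∘ (AddMonoidHom.fst (Fin n →₀ ℤ) (⨁ i : ι, ZMod (p i ^ e i))) := by
      funext z
      obtain ⟨a, b⟩ := z
      exact hsplit a b
    rw [heq]
    exact isPolyFn_comp _ hp₂
  have heq : f = f₁ ∘ eqv.toAddMonoidHom := by
    funext g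
    simp [f₁]
  rw [heq]
  exact isPolyFn_comp _ hp₁
end

section
/- Let G be an abelian group, f : G → ℂ a function, and n a natural number. Then Δ_{y_1}Δ_{y_2}⋯Δ_{y_{n+1}} f = 0 for all y_1,…,y_{n+1} in G if and only if (Δ_y)^{n+1} f = 0 for all y in G (Djoković's equivalence of the two forms of Fréchet's functional equation). -/
open Finset Pointwise

namespace FrechetAux

lemma mob {N : ℕ} (B : Finset (Fin N)) :
    ∑ S ∈ (univ : Finset (Fin N)).powerset.filter (fun S => B ⊆ S), (-1 : ℂ) ^ S.card
      = if B = univ then (-1 : ℂ) ^ N else 0 := by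
  have hdisj : ∀ V : Finset (Fin N), V ⊆ Bᶜ → Disjoint B V := fun V hV =>
    Finset.disjoint_left.2 fun a haB haV => (Finset.mem_compl.1 (hV haV)) haB
  have key : ∑ S ∈ (univ : Finset (Fin N)).powerset.filter (fun S => B ⊆ S), (-1 : ℂ) ^ S.card
      = ∑ V ∈ Bᶜ.powerset, (-1 : ℂ) ^ (B ∪ V).card := by
    refine Finset.sum_nbij' (fun S => S \ B) (fun V => B ∪ V) ?_ ?_ ?_ ?_ ?_
    · intro S hS
      simp only [mem_filter, mem_powerset] at hS ⊢
      intro a ha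
      rw [Finset.mem_sdiff] at ha
      exact Finset.mem_compl.2 ha.2
    · intro V hV
      simp only [mem_powerset] at hV
      simp only [mem_filter, mem_powerset]
      exact ⟨Finset.subset_univ _, Finset.subset_union_left⟩
    · intro S hS
      simp only [mem_filter, mem_powerset] at hS
      exact Finset.union_sdiff_of_subset hS.2
    · intro V hV
      simp only [mem_powerset] at hV
      exact Finset.union_sdiff_cancel_left (hdisj V hV)
    · intro S hS
      simp only [mem_filter, mem_powerset] at hS
      rw [Finset.union_sdiff_of_subset hS.2]
  rw [key]
  calc ∑ V ∈ Bᶜ.powerset, (-1 : ℂ) ^ (B ∪ V).card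
      = ∑ V ∈ Bᶜ.powerset, (-1 : ℂ) ^ B.card * (-1 : ℂ) ^ V.card := by
        refine Finset.sum_congr rfl fun V hV => ?_
        rw [Finset.card_union_of_disjoint (hdisj V (Finset.mem_powerset.1 hV)), pow_add]
    _ = (-1 : ℂ) ^ B.card * ∑ V ∈ Bᶜ.powerset, (-1 : ℂ) ^ V.card := by
        rw [Finset.mul_sum]
    _ = if B = univ then (-1 : ℂ) ^ N else 0 := by
        have hz : (∑ V ∈ Bᶜ.powerset, (-1 : ℂ) ^ V.card)
            = if Bᶜ = ∅ then 1 else 0 := by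
          have := Finset.sum_powerset_neg_one_pow_card (x := Bᶜ)
          exact_mod_cast congrArg (fun z : ℤ => (z : ℂ)) this
        rw [hz]
        by_cases hB : B = univ
        · subst hB
          simp [Finset.card_univ]
        · have hBc : ¬ (Bᶜ = ∅) := by
            simp only [Finset.compl_eq_empty_iff]
            exact hB
          simp [hBc, hB]

lemma span_pow_le {R : Type*} [CommRing R] {N K : ℕ} (d : Fin N → R) (I : Ideal R)
    (hd : ∀ i, d i ^ N ∈ I) (hK : N * (N - 1) < K) :
    Ideal.span (Set.range d) ^ K ≤ I := by
  rw [Ideal.span, Submodule.span_pow]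
  rw [show Submodule.span R (Set.range d ^ K) = Ideal.span (Set.range d ^ K) from rfl,
    Ideal.span_le]
  intro x hx
  rw [Set.mem_pow] at hx
  obtain ⟨c, hc⟩ := hx
  choose σ hσ using fun j => (c j).2
  have hx2 : x = ∏ j : Fin K, d (σ j) := by
    rw [← hc, List.prod_ofFn]
    exact Finset.prod_congr rfl fun j _ => (hσ j).symm
  obtain ⟨i, hi⟩ : ∃ i : Fin N, N - 1 < (univ.filter fun j => σ j = i).card := by
    apply Fintype.exists_lt_card_fiber_of_mul_lt_card
    simpa using hK
  have hN : N ≤ (univ.filter fun j => σ j = i).card := by omega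
  have hsplit : x = d i ^ N *
      (d i ^ ((univ.filter fun j => σ j = i).card - N) *
        ∏ j ∈ univ.filter fun j => ¬ σ j = i, d (σ j)) := by
    rw [hx2, ← Finset.prod_filter_mul_prod_filter_not univ (fun j => σ j = i)]
    have h1 : ∏ j ∈ univ.filter fun j => σ j = i, d (σ j)
        = d i ^ (univ.filter fun j => σ j = i).card := by
      rw [Finset.prod_congr rfl fun j hj => ?_, Finset.prod_const]
      rw [(Finset.mem_filter.1 hj).2]
    rw [h1, ← mul_assoc, ← pow_add, Nat.add_sub_cancel' hN]
  rw [hsplit]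
  exact Ideal.mul_mem_right _ _ (hd i)

variable {G : Type*} [AddCommGroup G]

def transl (y : G) : Module.End ℂ (G → ℂ) where
  toFun g := fun x => g (x + y)
  map_add' _ _ := rfl
  map_smul' _ _ := rfl

def translM : Multiplicative G →* Module.End ℂ (G → ℂ) where
  toFun y := transl y.toAdd
  map_one' := LinearMap.ext fun g => funext fun x => by simp [transl]
  map_mul' y z := LinearMap.ext fun g => funext fun x => by
    simp [transl, Module.End.mul_apply, add_assoc]

noncomputable def piA : AddMonoidAlgebra ℂ G →ₐ[ℂ] Module.End ℂ (G → ℂ) :=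
  AddMonoidAlgebra.lift ℂ _ G translM

noncomputable def ee (y : G) : AddMonoidAlgebra ℂ G :=
  AddMonoidAlgebra.of ℂ G (Multiplicative.ofAdd y)

lemma ee_mul (y z : G) : ee (G := G) (y + z) = ee y * ee z := by
  simp [ee, ← map_mul, ofAdd_add, AddMonoidAlgebra.single_mul_single]

lemma ee_zero : ee (G := G) 0 = 1 := by simp [ee, AddMonoidAlgebra.one_def]

lemma piA_ee (y : G) (g : G → ℂ) : piA (ee y) g = fun x => g (x + y) := by
  simp [piA, ee, AddMonoidAlgebra.lift_of, translM, transl]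

lemma piA_diff (y : G) (g : G → ℂ) : piA (ee y - 1) g = diffOp y g := by
  rw [map_sub, map_one]
  funext x
  simp [LinearMap.sub_apply, piA_ee, diffOp, Module.End.one_apply]

lemma appl_mul (a b : AddMonoidAlgebra ℂ G) (g : G → ℂ) :
    piA (a * b) g = piA a (piA b g) := by rw [map_mul]; rfl

lemma iter_eq (f : G → ℂ) (y : G) : ∀ m : ℕ, (diffOp y)^[m] f = piA ((ee y - 1) ^ m) f
  | 0 => by simp [Module.End.one_apply]
  | (m+1) => by
      rw [Function.iterate_succ_apply', iter_eq f y m, pow_succ', appl_mul, piA_diff]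

lemma foldr_eq (f : G → ℂ) : ∀ ys : List G,
    ys.foldr diffOp f = piA ((ys.map fun y => ee y - 1).prod) f
  | [] => by simp [Module.End.one_apply]
  | (y :: t) => by
      rw [List.foldr_cons, foldr_eq f t, List.map_cons, List.prod_cons, appl_mul, piA_diff]

lemma foldr_replicate (f : G → ℂ) (y : G) : ∀ m : ℕ,
    (List.replicate m y).foldr diffOp f = (diffOp y)^[m] f
  | 0 => rfl
  | (m+1) => by
      rw [List.replicate_succ, List.foldr_cons, foldr_replicate f y m,
        Function.iterate_succ_apply']

lemma key (f : G → ℂ) (N : ℕ) (v : Fin N → G)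
    (H : ∀ w : G, piA ((ee w - 1) ^ N) f = 0) :
    piA (∏ i : Fin N, (ee (v i) - 1)) f = 0 := by
  classical
  set K := N * (N - 1) + 1 with hK
  let A := AddMonoidAlgebra ℂ G
  let d : Fin N → A := fun i => ee (v i) - 1
  let P : Finset (Fin N) → A := fun U => ∏ i ∈ U, d i
  let g : A := P univ
  let evf : A →ₗ[ℂ] (G → ℂ) := (LinearMap.applyₗ f).comp piA.toLinearMap
  have hevf : ∀ a : A, evf a = piA a f := fun a => rfl
  let I₀ : Ideal A := Ideal.span {a | ∃ w : G, a = (ee w - 1) ^ N}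
  have hI₀ : ∀ a ∈ I₀, piA a f = 0 := by
    intro a ha
    induction ha using Submodule.span_induction with
    | mem x hx => obtain ⟨w, rfl⟩ := hx; exact H w
    | zero => rw [map_zero]; rfl
    | add x y _ _ ihx ihy => rw [map_add, LinearMap.add_apply, ihx, ihy, add_zero]
    | smul a x _ ih => rw [smul_eq_mul, appl_mul, ih, map_zero]
  let J : Ideal A := Ideal.span (Set.range d)
  have hJK : J ^ K ≤ I₀ :=
    span_pow_le d I₀ (fun i => Ideal.subset_span ⟨v i, rfl⟩) (Nat.lt_succ_self _)
  -- expansion of ee of sums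
  have hEE : ∀ S : Finset (Fin N), ee (∑ i ∈ S, v i) = ∏ i ∈ S, ee (v i) := by
    intro S
    induction S using Finset.cons_induction with
    | empty => simpa using ee_zero
    | cons a s ha ih => rw [Finset.sum_cons, Finset.prod_cons, ee_mul, ih]
  have hq : ∀ S : Finset (Fin N),
      ee (∑ i ∈ S, v i) - 1 = ∑ U ∈ S.powerset.erase ∅, P U := by
    intro S
    have h1 : ee (∑ i ∈ S, v i) = ∑ U ∈ S.powerset, P U := by
      rw [hEE S]
      rw [Finset.prod_congr rfl (fun i (_ : i ∈ S) => (sub_add_cancel (ee (v i)) 1).symm),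
        Finset.prod_add]
      exact Finset.sum_congr rfl fun U hU => by simp [P, d]
    have h2 : ∑ U ∈ S.powerset, P U = 1 + ∑ U ∈ S.powerset.erase ∅, P U := by
      rw [← Finset.add_sum_erase _ _ (Finset.empty_mem_powerset S)]
      simp [P]
    rw [h1, h2]
    ring
  -- E and its vanishing
  let term : (Fin N → Finset (Fin N)) → A := fun c => ∏ j : Fin N, P (c j)
  let E : A := ∑ S ∈ (univ : Finset (Fin N)).powerset,
    (-1 : ℂ) ^ S.card • ((ee (∑ i ∈ S, v i) - 1) ^ N)
  have hE0 : evf E = 0 := by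
    rw [map_sum]
    refine Finset.sum_eq_zero fun S _ => ?_
    rw [map_smul, hevf, H, smul_zero]
  have hqpow : ∀ S : Finset (Fin N),
      (ee (∑ i ∈ S, v i) - 1) ^ N
        = ∑ c ∈ Fintype.piFinset (fun _ : Fin N => S.powerset.erase ∅), term c := by
    intro S
    rw [hq S]
    rw [show (∑ U ∈ S.powerset.erase ∅, P U) ^ N = ∏ _j : Fin N, ∑ U ∈ S.powerset.erase ∅, P U by
      rw [Finset.prod_const, Finset.card_univ, Fintype.card_fin]]
    exact Finset.prod_univ_sum _ _
  let 𝒰 : Finset (Finset (Fin N)) := ((univ : Finset (Fin N)).powerset).erase ∅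
  let cov : Finset (Fin N → Finset (Fin N)) :=
    (Fintype.piFinset fun _ : Fin N => 𝒰).filter fun c => univ.biUnion c = univ
  have hE1 : E = (-1 : ℂ) ^ N • ∑ c ∈ cov, term c := by
    calc E = ∑ S ∈ (univ : Finset (Fin N)).powerset,
        ∑ c ∈ Fintype.piFinset (fun _ : Fin N => S.powerset.erase ∅),
          (-1 : ℂ) ^ S.card • term c := by
          refine Finset.sum_congr rfl fun S _ => ?_
          rw [hqpow S, Finset.smul_sum]
      _ = ∑ c ∈ Fintype.piFinset (fun _ : Fin N => 𝒰),
          ∑ S ∈ (univ : Finset (Fin N)).powerset.filter (fun S => univ.biUnion c ⊆ S),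
            (-1 : ℂ) ^ S.card • term c := by
          refine Finset.sum_comm' ?_
          intro S c
          constructor
          · rintro ⟨-, hc⟩
            rw [Fintype.mem_piFinset] at hc
            have h1 : ∀ j, c j ≠ ∅ ∧ c j ⊆ S := fun j => by
              have h2 := hc j
              rw [Finset.mem_erase, Finset.mem_powerset] at h2
              exact h2
            refine ⟨Finset.mem_filter.2 ⟨Finset.mem_powerset.2 (Finset.subset_univ _),
                Finset.biUnion_subset.2 fun j _ => (h1 j).2⟩,
              Fintype.mem_piFinset.2 fun j => Finset.mem_erase.2
                ⟨(h1 j).1, Finset.mem_powerset.2 (Finset.subset_univ _)⟩⟩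
          · rintro ⟨hS, hc⟩
            rw [Finset.mem_filter] at hS
            rw [Fintype.mem_piFinset] at hc
            refine ⟨Finset.mem_powerset.2 (Finset.subset_univ _),
              Fintype.mem_piFinset.2 fun j => ?_⟩
            have h2 := hc j
            rw [Finset.mem_erase] at h2
            exact Finset.mem_erase.2 ⟨h2.1, Finset.mem_powerset.2
              (Finset.biUnion_subset.1 hS.2 j (Finset.mem_univ j))⟩
      _ = ∑ c ∈ Fintype.piFinset (fun _ : Fin N => 𝒰),
          (if univ.biUnion c = univ then (-1 : ℂ) ^ N else 0) • term c := by
          refine Finset.sum_congr rfl fun c _ => ?_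
          rw [← Finset.sum_smul, mob]
      _ = ∑ c ∈ cov, (-1 : ℂ) ^ N • term c := by
          rw [Finset.sum_filter]
          refine Finset.sum_congr rfl fun c _ => ?_
          rw [ite_smul, zero_smul]
      _ = (-1 : ℂ) ^ N • ∑ c ∈ cov, term c := by rw [Finset.smul_sum]
  -- term as monomial
  have hterm : ∀ c : Fin N → Finset (Fin N),
      term c = ∏ i : Fin N, d i ^ (univ.filter fun j => i ∈ c j).card := by
    intro c
    calc term c = ∏ j : Fin N, ∏ i ∈ c j, d i := rfl
      _ = ∏ i : Fin N, ∏ _j ∈ univ.filter (fun j => i ∈ c j), d i := by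
          refine Finset.prod_comm' ?_
          intro j i
          simp
      _ = ∏ i : Fin N, d i ^ (univ.filter fun j => i ∈ c j).card := by
          exact Finset.prod_congr rfl fun i _ => Finset.prod_const _
  have hcount : ∀ c : Fin N → Finset (Fin N),
      ∑ i : Fin N, (univ.filter fun j => i ∈ c j).card = ∑ j : Fin N, (c j).card := by
    intro c
    simp only [Finset.card_eq_sum_ones]
    refine Finset.sum_comm' ?_
    intro i j
    simp
  -- split cov
  let Q : (Fin N → Finset (Fin N)) → Prop := fun c => ∀ j, (c j).card = 1
  have hpart1 : ∑ c ∈ cov.filter Q, term c = (N.factorial : ℂ) • g := by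
    have hbij : ∑ c ∈ cov.filter Q, term c = ∑ _σ : Equiv.Perm (Fin N), g := by
      symm
      refine Finset.sum_bij (fun σ _ => fun j => {σ j}) ?_ ?_ ?_ ?_
      · intro σ _
        simp only [Finset.mem_filter, cov, Fintype.mem_piFinset, 𝒰, Finset.mem_erase,
          Finset.mem_powerset]
        refine ⟨⟨fun j => ⟨Finset.singleton_ne_empty _, Finset.subset_univ _⟩, ?_⟩,
          fun j => Finset.card_singleton _⟩
        apply Finset.eq_univ_iff_forall.2
        intro i
        rw [Finset.mem_biUnion]
        exact ⟨σ.symm i, Finset.mem_univ _, by simp⟩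
      · intro σ _ τ _ h
        ext j : 1
        exact Finset.singleton_injective (congrFun h j)
      · intro c hc
        rw [Finset.mem_filter] at hc
        obtain ⟨hcov, hQ⟩ := hc
        choose a ha using fun j => Finset.card_eq_one.1 (hQ j)
        have hsurj : Function.Surjective a := by
          intro i
          rw [Finset.mem_filter] at hcov
          have : i ∈ univ.biUnion c := by rw [hcov.2]; exact Finset.mem_univ i
          rw [Finset.mem_biUnion] at this
          obtain ⟨j, _, hj⟩ := this
          rw [ha j, Finset.mem_singleton] at hj
          exact ⟨j, hj.symm⟩
        have hbij : Function.Bijective a := Finite.surjective_iff_bijective.1 hsurj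
        refine ⟨Equiv.ofBijective a hbij, Finset.mem_univ _, ?_⟩
        funext j
        rw [ha j]
        rfl
      · intro σ _
        show g = term (fun j => {σ j})
        calc g = ∏ i : Fin N, d i := rfl
          _ = ∏ j : Fin N, d (σ j) := (Equiv.prod_comp σ d).symm
          _ = term (fun j => {σ j}) := by
              refine Finset.prod_congr rfl fun j _ => ?_
              simp [term, P]
    rw [hbij, Finset.sum_const, Finset.card_univ, Fintype.card_perm, Fintype.card_fin,
      Nat.cast_smul_eq_nsmul]
  -- part 2
  let r : (Fin N → Finset (Fin N)) → A :=
    fun c => ∏ i : Fin N, d i ^ ((univ.filter fun j => i ∈ c j).card - 1)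
  have hpart2 : ∀ c ∈ cov.filter (fun c => ¬ Q c), term c = g * r c ∧ r c ∈ J := by
    intro c hc
    rw [Finset.mem_filter] at hc
    obtain ⟨hcov, hnQ⟩ := hc
    rw [Finset.mem_filter] at hcov
    obtain ⟨hpi, hcovu⟩ := hcov
    rw [Fintype.mem_piFinset] at hpi
    have hm1 : ∀ i, 1 ≤ (univ.filter fun j => i ∈ c j).card := by
      intro i
      have : i ∈ univ.biUnion c := by rw [hcovu]; exact Finset.mem_univ i
      rw [Finset.mem_biUnion] at this
      obtain ⟨j, _, hj⟩ := this
      exact Finset.card_pos.2 ⟨j, Finset.mem_filter.2 ⟨Finset.mem_univ j, hj⟩⟩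
    have hc1 : ∀ j, 1 ≤ (c j).card := by
      intro j
      have hj := hpi j
      rw [Finset.mem_erase] at hj
      exact Finset.card_pos.2 (Finset.nonempty_iff_ne_empty.2 hj.1)
    have hm2 : ∃ i, 2 ≤ (univ.filter fun j => i ∈ c j).card := by
      by_contra hcon
      push_neg at hcon
      have hall : ∀ i, (univ.filter fun j => i ∈ c j).card = 1 := fun i => by
        have := hcon i
        have := hm1 i
        omega
      have hsum : ∑ j : Fin N, (c j).card = N := by
        rw [← hcount c]
        simp [hall]
      obtain ⟨j₀, hj₀⟩ := not_forall.1 hnQ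
      have hj₀2 : 2 ≤ (c j₀).card := by
        have := hc1 j₀
        omega
      have hlt : ∑ _j : Fin N, 1 < ∑ j : Fin N, (c j).card := by
        refine Finset.sum_lt_sum (fun j _ => hc1 j) ⟨j₀, Finset.mem_univ _, ?_⟩
        omega
      simp only [Finset.sum_const, Finset.card_univ, Fintype.card_fin, smul_eq_mul,
        mul_one] at hlt
      omega
    constructor
    · rw [hterm c]
      calc ∏ i : Fin N, d i ^ (univ.filter fun j => i ∈ c j).card
          = ∏ i : Fin N, d i * d i ^ ((univ.filter fun j => i ∈ c j).card - 1) := by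
            refine Finset.prod_congr rfl fun i _ => ?_
            rw [← pow_succ']
            congr 1
            have := hm1 i
            omega
        _ = g * r c := Finset.prod_mul_distrib
    · obtain ⟨i₀, hi₀⟩ := hm2
      have hdvd : d i₀ ∣ r c :=
        dvd_trans (dvd_pow_self (d i₀) (by omega : (univ.filter fun j => i₀ ∈ c j).card - 1 ≠ 0))
          (Finset.dvd_prod_of_mem _ (Finset.mem_univ i₀))
      obtain ⟨x, hx⟩ := hdvd
      rw [hx]
      exact Ideal.mul_mem_right _ _ (Ideal.subset_span ⟨i₀, rfl⟩)
  let h : A := ∑ c ∈ cov.filter (fun c => ¬ Q c), r c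
  have hhJ : h ∈ J := Submodule.sum_mem _ fun c hc => (hpart2 c hc).2
  have hcovsum : ∑ c ∈ cov, term c = (N.factorial : ℂ) • g + g * h := by
    rw [← Finset.sum_filter_add_sum_filter_not cov Q, hpart1]
    congr 1
    rw [Finset.mul_sum]
    exact Finset.sum_congr rfl fun c hc => (hpart2 c hc).1
  -- evaluation
  set W : G → ℂ := piA g f with hW
  have hEval : (N.factorial : ℂ) • W + piA h W = 0 := by
    have h0 := hE0
    rw [hE1, map_smul, hcovsum, smul_eq_zero] at h0
    rcases h0 with h1 | h2
    · exact absurd h1 (pow_ne_zero _ (by norm_num))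
    · rw [map_add, map_smul, hevf, hevf, mul_comm, appl_mul] at h2
      exact h2
  have hNfac : (N.factorial : ℂ) ≠ 0 := Nat.cast_ne_zero.2 (Nat.factorial_ne_zero N)
  let u : A := (-(N.factorial : ℂ)⁻¹) • h
  have hu : piA u W = W := by
    have hhW : piA h W = -((N.factorial : ℂ) • W) := by
      rw [eq_neg_iff_add_eq_zero, add_comm]
      exact hEval
    rw [map_smul, LinearMap.smul_apply, hhW, smul_neg, neg_smul, neg_neg, smul_smul,
      inv_mul_cancel₀ hNfac, one_smul]
  have huJ : u ∈ J := by
    rw [show u = algebraMap ℂ A (-(N.factorial : ℂ)⁻¹) * h from Algebra.smul_def _ _]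
    exact Ideal.mul_mem_left _ _ hhJ
  have hiter : ∀ k : ℕ, W = piA (u ^ k) W := by
    intro k
    induction k with
    | zero => rw [pow_zero, map_one]; rfl
    | succ k ih => rw [pow_succ, appl_mul, hu, ← ih]
  have hfin : W = 0 := by
    rw [hiter K, hW, ← appl_mul]
    exact hI₀ _ (Ideal.mul_mem_right _ _ (hJK (Ideal.pow_mem_pow huJ K)))
  exact hfin

end FrechetAux

lemma FrechetAux.exists_ofFn {α : Type*} (ys : List α) {N : ℕ} (h : ys.length = N) :
    ∃ v : Fin N → α, ys = List.ofFn v := by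
  subst h
  exact ⟨ys.get, (List.ofFn_get ys).symm⟩

/-- Djoković's theorem: the two forms of Fréchet's functional equation are
equivalent. -/
theorem frechet_iff_frechet_one_step
    {G : Type*} [AddCommGroup G] (f : G → ℂ) (n : ℕ) :
    (∀ ys : List G, ys.length = n + 1 → ys.foldr diffOp f = 0) ↔
      (∀ y : G, (diffOp y)^[n + 1] f = 0) := by
  constructor
  · intro hmix y
    rw [← FrechetAux.foldr_replicate f y (n + 1)]
    exact hmix _ List.length_replicate
  · intro H ys hlen
    obtain ⟨v, rfl⟩ := FrechetAux.exists_ofFn ys hlen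
    rw [FrechetAux.foldr_eq, List.map_ofFn, List.prod_ofFn]
    exact FrechetAux.key f (n + 1) v fun w => by
      rw [← FrechetAux.iter_eq]
      exact H w
end

section
/- Let G be the direct sum of countably many copies of ℤ (the group of finitely supported functions x : ℕ → ℤ with pointwise addition) and let f : G → ℂ be defined by f(x) = Σ_{i∈ℕ} x_i³. Then for every y in G the first difference Δ_y f, i.e. the function x ↦ f(x+y) − f(x), is a polynomial on G. -/
/-- For `G = ⊕_{i ∈ ℕ} ℤ` and `f(x) = Σ_i x_i ^ 3`, every first difference `Δ_y f`
is a polynomial. -/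
theorem firstDifference_sumCubes_isPoly
    (f : (ℕ →₀ ℤ) → ℂ) (hf : ∀ x : ℕ →₀ ℤ, f x = x.sum fun _ m => (m : ℂ) ^ 3) :
    ∀ y : ℕ →₀ ℤ, IsPolyFn (diffOp y f) := by
  intro y
  have key : diffOp y f = ∑ i ∈ y.support,
      (fun x : ℕ →₀ ℤ => 3 * (y i : ℂ) * (x i : ℂ) ^ 2
        + 3 * (y i : ℂ) ^ 2 * (x i : ℂ) + (y i : ℂ) ^ 3) := by
    funext x
    rw [Finset.sum_apply]
    show f (x + y) - f x = _
    rw [hf, hf]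
    set s := x.support ∪ y.support with hs
    have h1 : (x + y).sum (fun _ m => (m : ℂ) ^ 3)
        = ∑ i ∈ s, (((x + y) i : ℂ)) ^ 3 := by
      apply Finsupp.sum_of_support_subset
      · exact (Finsupp.support_add).trans (le_refl _)
      · intro i _; simp
    have h2 : x.sum (fun _ m => (m : ℂ) ^ 3) = ∑ i ∈ s, ((x i : ℂ)) ^ 3 := by
      apply Finsupp.sum_of_support_subset
      · exact Finset.subset_union_left
      · intro i _; simp
    rw [h1, h2, ← Finset.sum_sub_distrib]
    rw [← Finset.sum_subset (Finset.subset_union_right : y.support ⊆ s)]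
    · apply Finset.sum_congr rfl
      intro i _
      simp only [Finsupp.add_apply]
      push_cast
      ring
    · intro i _ hi
      have : y i = 0 := Finsupp.notMem_support_iff.mp hi
      simp [Finsupp.add_apply, this]
  rw [IsPolyFn, key]
  apply Subalgebra.sum_mem
  intro i _
  have hcoord : (fun x : ℕ →₀ ℤ => ((x i : ℂ))) ∈
      Algebra.adjoin ℂ {a : (ℕ →₀ ℤ) → ℂ | IsAdditiveFn a} := by
    apply Algebra.subset_adjoin
    intro u v
    simp [Finsupp.add_apply]
  have hc : ∀ c : ℂ, (fun _ : ℕ →₀ ℤ => c) ∈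
      Algebra.adjoin ℂ {a : (ℕ →₀ ℤ) → ℂ | IsAdditiveFn a} := fun c =>
    Subalgebra.algebraMap_mem _ c
  have : (fun x : ℕ →₀ ℤ => 3 * (y i : ℂ) * (x i : ℂ) ^ 2
        + 3 * (y i : ℂ) ^ 2 * (x i : ℂ) + (y i : ℂ) ^ 3)
      = (fun _ => (3 * (y i : ℂ))) * ((fun x : ℕ →₀ ℤ => ((x i : ℂ)))
          * (fun x : ℕ →₀ ℤ => ((x i : ℂ))))
        + (fun _ => (3 * (y i : ℂ) ^ 2)) * (fun x : ℕ →₀ ℤ => ((x i : ℂ)))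
        + (fun _ => ((y i : ℂ) ^ 3)) := by
    funext x; simp only [Pi.mul_apply, Pi.add_apply]; ring
  rw [this]
  exact add_mem (add_mem (mul_mem (hc _) (mul_mem hcoord hcoord))
    (mul_mem (hc _) hcoord)) (hc _)
end

section
/- Let G be the direct sum of countably many copies of ℤ and let f : G → ℂ be defined by f(x) = Σ_{i∈ℕ} x_i³. Then f is a generalized polynomial (of degree 3) but f is not a polynomial; in particular, the variety τ(f) contains every coordinate projection x ↦ x_i, these projections are linearly independent, and τ(f) is infinite dimensional. -/
/- ### Auxiliary lemmas -/

section Aux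

lemma supp_add_sub {u v : ℕ →₀ ℤ} {S : Finset ℕ} (hu : u.support ⊆ S) (hv : v.support ⊆ S) :
    (u + v).support ⊆ S :=
  Finsupp.support_add.trans (Finset.union_subset hu hv)

lemma f_eq_sum {f : (ℕ →₀ ℤ) → ℂ} (hf : ∀ x : ℕ →₀ ℤ, f x = x.sum fun _ m => (m : ℂ) ^ 3)
    (u : ℕ →₀ ℤ) (S : Finset ℕ) (h : u.support ⊆ S) :
    f u = ∑ t ∈ S, ((u t : ℂ)) ^ 3 := by
  rw [hf]
  exact Finsupp.sum_of_support_subset _ h _ (by intros; simp)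

lemma third_diff {f : (ℕ →₀ ℤ) → ℂ} (hf : ∀ x : ℕ →₀ ℤ, f x = x.sum fun _ m => (m : ℂ) ^ 3)
    (y z w : ℕ →₀ ℤ) :
    diffOp y (diffOp z (diffOp w f)) =
      fun _ => 6 * ∑ t ∈ y.support ∪ z.support ∪ w.support, (y t : ℂ) * (z t : ℂ) * (w t : ℂ) := by
  classical
  funext x
  simp only [diffOp]
  set S : Finset ℕ := x.support ∪ (y.support ∪ z.support ∪ w.support) with hS
  have hx : x.support ⊆ S := Finset.subset_union_left
  have hy : y.support ⊆ S :=
    le_trans (le_trans Finset.subset_union_left Finset.subset_union_left)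
      Finset.subset_union_right
  have hz : z.support ⊆ S :=
    le_trans (le_trans Finset.subset_union_right Finset.subset_union_left)
      Finset.subset_union_right
  have hw : w.support ⊆ S := le_trans Finset.subset_union_right Finset.subset_union_right
  rw [f_eq_sum hf (x + y + z + w) S (supp_add_sub (supp_add_sub (supp_add_sub hx hy) hz) hw),
    f_eq_sum hf (x + y + z) S (supp_add_sub (supp_add_sub hx hy) hz),
    f_eq_sum hf (x + y + w) S (supp_add_sub (supp_add_sub hx hy) hw),
    f_eq_sum hf (x + y) S (supp_add_sub hx hy),
    f_eq_sum hf (x + z + w) S (supp_add_sub (supp_add_sub hx hz) hw),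
    f_eq_sum hf (x + z) S (supp_add_sub hx hz),
    f_eq_sum hf (x + w) S (supp_add_sub hx hw),
    f_eq_sum hf x S hx]
  simp only [← Finset.sum_sub_distrib]
  have step1 : ∀ t ∈ S,
      ((x + y + z + w) t : ℂ) ^ 3 - ((x + y + z) t : ℂ) ^ 3 -
        (((x + y + w) t : ℂ) ^ 3 - ((x + y) t : ℂ) ^ 3) -
        (((x + z + w) t : ℂ) ^ 3 - ((x + z) t : ℂ) ^ 3 -
          (((x + w) t : ℂ) ^ 3 - ((x t : ℂ)) ^ 3)) =
      6 * ((y t : ℂ) * (z t : ℂ) * (w t : ℂ)) := by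
    intro t _
    simp only [Finsupp.add_apply]
    push_cast
    ring
  rw [Finset.sum_congr rfl step1, Finset.mul_sum]
  refine (Finset.sum_subset Finset.subset_union_right ?_).symm
  intro t _ ht
  simp only [Finset.mem_union, not_or, Finsupp.mem_support_iff, not_not] at ht
  simp [ht.1.1]

/-- The translation operator as a linear map. -/
def translateL {G : Type*} [AddCommGroup G] (y : G) : (G → ℂ) →ₗ[ℂ] (G → ℂ) where
  toFun g := fun x => g (x + y)
  map_add' _ _ := rfl
  map_smul' _ _ := rfl

lemma span_translation_invariant {G : Type*} [AddCommGroup G] (s : Set (G → ℂ))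
    (hs : ∀ g ∈ s, ∀ y : G, (fun x => g (x + y)) ∈ Submodule.span ℂ s) :
    ∀ g ∈ Submodule.span ℂ s, ∀ y : G, (fun x => g (x + y)) ∈ Submodule.span ℂ s := by
  intro g hg y
  have hmap : (Submodule.span ℂ s).map (translateL y) ≤ Submodule.span ℂ s := by
    rw [Submodule.map_span]
    refine Submodule.span_le.2 ?_
    rintro _ ⟨u, hu, rfl⟩
    exact hs u hu y
  exact hmap ⟨g, hg, rfl⟩

lemma poly_in_fd_invariant {G : Type*} [AddCommGroup G] {f : G → ℂ} (hp : IsPolyFn f) :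
    ∃ W : Submodule ℂ (G → ℂ), f ∈ W ∧ W.FG ∧
      ∀ g ∈ W, ∀ y : G, (fun x => g (x + y)) ∈ W := by
  refine Algebra.adjoin_induction
    (p := fun g (_ : g ∈ Algebra.adjoin ℂ {a : G → ℂ | IsAdditiveFn a}) =>
      ∃ W : Submodule ℂ (G → ℂ), g ∈ W ∧ W.FG ∧
        ∀ h ∈ W, ∀ y : G, (fun x => h (x + y)) ∈ W)
    ?_ ?_ ?_ ?_ hp
  · -- additive functions
    intro a ha
    refine ⟨Submodule.span ℂ {a, (1 : G → ℂ)}, Submodule.subset_span (by simp),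
      Submodule.fg_span ((Set.finite_singleton _).insert _), ?_⟩
    refine span_translation_invariant _ ?_
    rintro g (rfl | hg1) y
    · have : (fun x => g (x + y)) = g + (g y) • (1 : G → ℂ) := by
        funext x
        simp [ha x y, Pi.add_apply]
      rw [this]
      exact Submodule.add_mem _ (Submodule.subset_span (by simp))
        (Submodule.smul_mem _ _ (Submodule.subset_span (by simp)))
    · simp only [Set.mem_singleton_iff] at hg1
      subst hg1
      have : (fun x : G => (1 : G → ℂ) (x + y)) = (1 : G → ℂ) := rfl
      rw [this]
      exact Submodule.subset_span (by simp)
  · -- scalars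
    intro r
    refine ⟨Submodule.span ℂ {(1 : G → ℂ)}, ?_,
      Submodule.fg_span (Set.finite_singleton _), ?_⟩
    · rw [Algebra.algebraMap_eq_smul_one]
      exact Submodule.smul_mem _ _ (Submodule.mem_span_singleton_self _)
    · refine span_translation_invariant _ ?_
      rintro g rfl y
      exact Submodule.subset_span rfl
  · -- addition
    rintro g h _ _ ⟨W1, hg1, fg1, t1⟩ ⟨W2, hg2, fg2, t2⟩
    refine ⟨W1 ⊔ W2, Submodule.add_mem _ (Submodule.mem_sup_left hg1)
      (Submodule.mem_sup_right hg2), fg1.sup fg2, ?_⟩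
    intro u hu y
    rcases Submodule.mem_sup.1 hu with ⟨u1, hu1, u2, hu2, rfl⟩
    have : (fun x => (u1 + u2) (x + y)) =
        (fun x => u1 (x + y)) + fun x => u2 (x + y) := rfl
    rw [this]
    exact Submodule.add_mem _ (Submodule.mem_sup_left (t1 u1 hu1 y))
      (Submodule.mem_sup_right (t2 u2 hu2 y))
  · -- multiplication
    rintro g h _ _ ⟨W1, hg1, fg1, t1⟩ ⟨W2, hg2, fg2, t2⟩
    refine ⟨W1 * W2, Submodule.mul_mem_mul hg1 hg2, fg1.mul fg2, ?_⟩
    intro u hu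
    refine Submodule.mul_induction_on (C := fun u => ∀ y : G, (fun x => u (x + y)) ∈ W1 * W2)
      hu ?_ ?_
    · intro m hm n hn y
      have : (fun x => (m * n) (x + y)) =
          (fun x => m (x + y)) * fun x => n (x + y) := rfl
      rw [this]
      exact Submodule.mul_mem_mul (t1 m hm y) (t2 n hn y)
    · intro a b ha hb y
      have : (fun x => (a + b) (x + y)) =
          (fun x => a (x + y)) + fun x => b (x + y) := rfl
      rw [this]
      exact Submodule.add_mem _ (ha y) (hb y)

end Aux

/-- For `G = ⊕_{i ∈ ℕ} ℤ` and `f(x) = Σ_i x_i ^ 3`: `f` is a generalized polynomial of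
degree `3`, it is not a polynomial, the variety `τ(f)` contains all coordinate
projections, these are linearly independent, and `τ(f)` is infinite dimensional. -/
theorem sumCubes_genPoly_not_poly
    (f : (ℕ →₀ ℤ) → ℂ) (hf : ∀ x : ℕ →₀ ℤ, f x = x.sum fun _ m => (m : ℂ) ^ 3) :
    (∀ ys : List (ℕ →₀ ℤ), ys.length = 4 → ys.foldr diffOp f = 0) ∧
    ¬ (∀ ys : List (ℕ →₀ ℤ), ys.length = 3 → ys.foldr diffOp f = 0) ∧
    ¬ IsPolyFn f ∧
    (∀ i : ℕ, (fun x : ℕ →₀ ℤ => (x i : ℂ)) ∈ variety f) ∧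
    LinearIndependent ℂ (fun (i : ℕ) (x : ℕ →₀ ℤ) => (x i : ℂ)) ∧
    ¬ FiniteDimensional ℂ ↥(variety f) := by
  classical
  -- (1) fourth differences vanish
  have h1 : ∀ ys : List (ℕ →₀ ℤ), ys.length = 4 → ys.foldr diffOp f = 0 := by
    intro ys hlen
    rcases ys with _ | ⟨a, _ | ⟨b, _ | ⟨c, _ | ⟨d, _ | ⟨e, tl⟩⟩⟩⟩⟩ <;> simp_all
    show diffOp a (diffOp b (diffOp c (diffOp d f))) = 0
    rw [third_diff hf b c d]
    funext x
    simp [diffOp]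
  -- (2) third differences do not all vanish
  have h2 : ¬ (∀ ys : List (ℕ →₀ ℤ), ys.length = 3 → ys.foldr diffOp f = 0) := by
    intro h
    set e : ℕ →₀ ℤ := Finsupp.single 0 1 with he
    have h3 := h [e, e, e] rfl
    have h4 : List.foldr diffOp f [e, e, e] = diffOp e (diffOp e (diffOp e f)) := rfl
    rw [h4, third_diff hf e e e] at h3
    have h5 := congrFun h3 0
    rw [Pi.zero_apply] at h5
    have hsupp : e.support = {0} := Finsupp.support_single_ne_zero 0 one_ne_zero
    rw [hsupp] at h5
    simp [he, Finsupp.single_eq_same] at h5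
  -- (4) coordinate projections belong to the variety
  have h4 : ∀ i : ℕ, (fun x : ℕ →₀ ℤ => (x i : ℂ)) ∈ variety f := by
    intro i
    set s : Set ((ℕ →₀ ℤ) → ℂ) := {g | ∃ y : ℕ →₀ ℤ, g = fun x => f (x + y)} with hs
    have key : (fun x : ℕ →₀ ℤ => (x i : ℂ)) =
        (6⁻¹ : ℂ) • (fun x => f (x + Finsupp.single i 1)) +
        (6⁻¹ : ℂ) • (fun x => f (x + Finsupp.single i (-1))) -
        (3⁻¹ : ℂ) • fun x => f (x + 0) := by
      funext x
      have hS : ∀ n : ℤ, (x + Finsupp.single i n).support ⊆ insert i x.support := by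
        intro n
        refine Finsupp.support_add.trans (Finset.union_subset (Finset.subset_insert _ _) ?_)
        exact Finsupp.support_single_subset.trans (by simp)
      have e0 : f (x + 0) = ∑ t ∈ insert i x.support, ((x t : ℂ)) ^ 3 := by
        rw [add_zero]
        exact f_eq_sum hf x _ (Finset.subset_insert _ _)
      have e1 := f_eq_sum hf (x + Finsupp.single i 1) (insert i x.support) (hS 1)
      have e2 := f_eq_sum hf (x + Finsupp.single i (-1)) (insert i x.support) (hS (-1))
      simp only [Pi.add_apply, Pi.sub_apply, Pi.smul_apply, smul_eq_mul, e0, e1, e2]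
      rw [Finset.mul_sum, Finset.mul_sum, Finset.mul_sum, ← Finset.sum_add_distrib,
        ← Finset.sum_sub_distrib]
      have : ∀ t ∈ insert i x.support,
          (6⁻¹ : ℂ) * ((((x + Finsupp.single i (1 : ℤ)) t : ℤ) : ℂ)) ^ 3 +
            (6⁻¹ : ℂ) * ((((x + Finsupp.single i (-1 : ℤ)) t : ℤ) : ℂ)) ^ 3 -
            (3⁻¹ : ℂ) * ((x t : ℂ)) ^ 3 =
          if i = t then (x t : ℂ) else 0 := by
        intro t _
        simp only [Finsupp.add_apply, Finsupp.single_apply]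
        rcases eq_or_ne i t with h | h
        · subst h
          simp only [if_pos rfl]
          push_cast
          ring
        · simp only [if_neg h]
          push_cast
          ring
      rw [Finset.sum_congr rfl this, Finset.sum_ite_eq]
      simp
    have hmem : ∀ y : ℕ →₀ ℤ, (fun x => f (x + y)) ∈ Submodule.span ℂ s :=
      fun y => Submodule.subset_span ⟨y, rfl⟩
    have : (fun x : ℕ →₀ ℤ => (x i : ℂ)) ∈ Submodule.span ℂ s := by
      rw [key]
      exact Submodule.sub_mem _
        (Submodule.add_mem _ (Submodule.smul_mem _ _ (hmem _)) (Submodule.smul_mem _ _ (hmem _)))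
        (Submodule.smul_mem _ _ (hmem _))
    exact (Submodule.le_topologicalClosure _) this
  -- (5) linear independence of coordinate projections
  have h5 : LinearIndependent ℂ (fun (i : ℕ) (x : ℕ →₀ ℤ) => (x i : ℂ)) := by
    rw [linearIndependent_iff']
    intro t g hsum i hi
    have h := congrFun hsum (Finsupp.single i 1)
    simp only [Finset.sum_apply, Pi.smul_apply, smul_eq_mul, Pi.zero_apply,
      Finsupp.single_apply] at h
    rw [Finset.sum_congr rfl (fun j _ => by
      show g j * ((if i = j then (1 : ℤ) else 0 : ℤ) : ℂ) = if i = j then g j else 0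
      split <;> simp)] at h
    rwa [Finset.sum_ite_eq, if_pos hi] at h
  -- (6) the variety is infinite dimensional
  have h6 : ¬ FiniteDimensional ℂ ↥(variety f) := by
    intro hFD
    set v : ℕ → ↥(variety f) := fun i => ⟨fun x => (x i : ℂ), h4 i⟩ with hv
    have hcomp : (variety f).subtype ∘ v = fun (i : ℕ) (x : ℕ →₀ ℤ) => (x i : ℂ) := rfl
    have hli : LinearIndependent ℂ v :=
      LinearIndependent.of_comp (variety f).subtype (by rw [hcomp]; exact h5)
    have := hli.lt_aleph0_of_finiteDimensional
    simp [Cardinal.mk_nat] at this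
  -- (3) f is not a polynomial
  have h3 : ¬ IsPolyFn f := by
    intro hp
    obtain ⟨W, hfW, hFG, hT⟩ := poly_in_fd_invariant hp
    have hWfd : FiniteDimensional ℂ ↥W := Module.Finite.iff_fg.2 hFG
    have hclosed : IsClosed (W : Set ((ℕ →₀ ℤ) → ℂ)) := W.closed_of_finiteDimensional
    have hspan : Submodule.span ℂ {g : (ℕ →₀ ℤ) → ℂ | ∃ y, g = fun x => f (x + y)} ≤ W := by
      refine Submodule.span_le.2 ?_
      rintro g ⟨y, rfl⟩
      exact hT f hfW y
    have hle : variety f ≤ W := Submodule.topologicalClosure_minimal _ hspan hclosed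
    exact h6 (Submodule.finiteDimensional_of_le hle)
  exact ⟨h1, h2, h3, h4, h5, h6⟩
end

section
/- There exist an abelian group G and a fake polynomial f : G → ℂ of degree at least three such that for every y in G the first difference Δ_y f is a polynomial; in other words, the variety generated by the first differences of a fake polynomial need not contain any fake polynomial. (Witness: G = ⊕_{i∈ℕ} ℤ and f(x) = Σ_{i∈ℕ} x_i³.) -/
noncomputable def FF : (ℕ →₀ ℤ) → ℂ := fun x => x.sum fun _ n => (n : ℂ) ^ 3

lemma FF_apply (x : ℕ →₀ ℤ) (s : Finset ℕ) (h : x.support ⊆ s) :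
    FF x = ∑ k ∈ s, ((x k : ℂ)) ^ 3 :=
  Finsupp.sum_of_support_subset x h _ (fun i _ => by simp)

lemma FF_add (x y : ℕ →₀ ℤ) :
    FF (x + y) = FF x + ∑ k ∈ y.support, (((x k : ℂ) + (y k : ℂ)) ^ 3 - (x k : ℂ) ^ 3) := by
  classical
  set u := x.support ∪ y.support with hu
  have h1 : FF (x + y) = ∑ k ∈ u, ((x k : ℂ) + (y k : ℂ)) ^ 3 := by
    rw [FF_apply (x + y) u Finsupp.support_add]
    exact Finset.sum_congr rfl fun k _ => by simp [Finsupp.add_apply]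
  have h2 : FF x = ∑ k ∈ u, (x k : ℂ) ^ 3 := FF_apply x u Finset.subset_union_left
  have h3 : (∑ k ∈ y.support, (((x k : ℂ) + (y k : ℂ)) ^ 3 - (x k : ℂ) ^ 3))
      = ∑ k ∈ u, (((x k : ℂ) + (y k : ℂ)) ^ 3 - (x k : ℂ) ^ 3) :=
    Finset.sum_subset Finset.subset_union_right
      (fun k _ hk => by simp [Finsupp.notMem_support_iff.mp hk])
  rw [h1, h2, h3, ← Finset.sum_add_distrib]
  exact Finset.sum_congr rfl fun k _ => by ring

lemma diffOp_FF (y : ℕ →₀ ℤ) :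
    diffOp y FF = fun x => ∑ k ∈ y.support, (((x k : ℂ) + (y k : ℂ)) ^ 3 - (x k : ℂ) ^ 3) :=
  funext fun x => by simp [diffOp, FF_add]

lemma fourth_diff (a b c d : ℕ →₀ ℤ) :
    diffOp a (diffOp b (diffOp c (diffOp d FF))) = 0 := by
  rw [diffOp_FF d]
  funext x
  simp only [diffOp, Pi.zero_apply, Finsupp.add_apply, Int.cast_add,
    ← Finset.sum_sub_distrib]
  refine Finset.sum_eq_zero fun k _ => by ring

lemma FF_single (i : ℕ) (n : ℤ) : FF (Finsupp.single i n) = (n : ℂ) ^ 3 := by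
  rw [FF_apply _ {i} Finsupp.support_single_subset]
  simp

lemma third_diff_ne :
    ¬ (∀ ys : List (ℕ →₀ ℤ), ys.length = 3 → ys.foldr diffOp FF = 0) := by
  intro h
  have h3 := h [Finsupp.single 0 1, Finsupp.single 0 1, Finsupp.single 0 1] rfl
  have := congrFun h3 0
  simp only [List.foldr, diffOp, Pi.zero_apply, zero_add, ← Finsupp.single_add] at this
  rw [show (FF 0) = 0 by simp [FF]] at this
  simp only [FF_single] at this
  norm_num at this

open Pointwise in
lemma poly_translates {G : Type*} [AddCommGroup G] {g : G → ℂ} (hg : IsPolyFn g) :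
    ∃ S : Set (G → ℂ), S.Finite ∧ ∀ y, (fun x => g (x + y)) ∈ Submodule.span ℂ S := by
  refine Algebra.adjoin_induction (p := fun g _ =>
      ∃ S : Set (G → ℂ), S.Finite ∧ ∀ y, (fun x => g (x + y)) ∈ Submodule.span ℂ S)
    ?_ ?_ ?_ ?_ hg
  · intro a ha
    refine ⟨{a, 1}, (Set.finite_singleton _).insert _, fun y => ?_⟩
    have : (fun x => a (x + y)) = a + (a y) • (1 : G → ℂ) := by
      funext x
      simp [ha x y]
    rw [this]
    exact Submodule.add_mem _ (Submodule.subset_span (by simp))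
      (Submodule.smul_mem _ _ (Submodule.subset_span (by simp)))
  · intro r
    refine ⟨{1}, Set.finite_singleton _, fun y => ?_⟩
    have : (fun x => (algebraMap ℂ (G → ℂ) r) (x + y)) = r • (1 : G → ℂ) := by
      funext x; simp [Algebra.algebraMap_eq_smul_one]
    rw [this]
    exact Submodule.smul_mem _ _ (Submodule.subset_span rfl)
  · rintro u v _ _ ⟨S, hS, hSm⟩ ⟨T, hT, hTm⟩
    refine ⟨S ∪ T, hS.union hT, fun y => ?_⟩
    have : (fun x => (u + v) (x + y)) = (fun x => u (x + y)) + (fun x => v (x + y)) := rfl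
    rw [this]
    exact Submodule.add_mem _
      (Submodule.span_mono Set.subset_union_left (hSm y))
      (Submodule.span_mono Set.subset_union_right (hTm y))
  · rintro u v _ _ ⟨S, hS, hSm⟩ ⟨T, hT, hTm⟩
    refine ⟨S * T, hS.mul hT, fun y => ?_⟩
    have : (fun x => (u * v) (x + y)) = (fun x => u (x + y)) * (fun x => v (x + y)) := rfl
    rw [this, ← Submodule.span_mul_span]
    exact Submodule.mul_mem_mul (hSm y) (hTm y)

lemma FF_not_poly : ¬ IsPolyFn FF := by
  intro hF
  obtain ⟨S, hSfin, hS⟩ := poly_translates hF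
  haveI : FiniteDimensional ℂ (Submodule.span ℂ S) :=
    FiniteDimensional.span_of_finite ℂ hSfin
  -- the functions q i x = 6 * x i + 6 lie in span S
  have hq : ∀ i : ℕ, (fun x : ℕ →₀ ℤ => 6 * (x i : ℂ) + 6) ∈ Submodule.span ℂ S := by
    intro i
    have key : (fun x : ℕ →₀ ℤ => 6 * (x i : ℂ) + 6) =
        (fun x => FF (x + Finsupp.single i 2)) - (2 : ℂ) • (fun x => FF (x + Finsupp.single i 1))
          + (fun x => FF (x + 0)) := by
      funext x
      simp only [Pi.add_apply, Pi.sub_apply, Pi.smul_apply, smul_eq_mul, add_zero]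
      rw [FF_add, FF_add,
        Finsupp.support_single_ne_zero i (two_ne_zero), Finsupp.support_single_ne_zero i (one_ne_zero),
        Finset.sum_singleton, Finset.sum_singleton, Finsupp.single_eq_same, Finsupp.single_eq_same]
      push_cast
      ring
    rw [key]
    exact Submodule.add_mem _
      (Submodule.sub_mem _ (hS _) (Submodule.smul_mem _ _ (hS _))) (hS 0)
  -- these functions are linearly independent
  have hli : LinearIndependent ℂ (fun i : ℕ => (fun x : ℕ →₀ ℤ => 6 * (x i : ℂ) + 6)) := by
    rw [linearIndependent_iff']
    intro s c hsum j hj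
    have e0 := congrFun hsum 0
    have ej := congrFun hsum (Finsupp.single j 1)
    simp only [Finset.sum_apply, Pi.smul_apply, smul_eq_mul, Pi.zero_apply,
      Finsupp.coe_zero, Int.cast_zero, mul_zero, zero_add,
      Finsupp.single_apply] at e0 ej
    have ej' : ∑ i ∈ s, ((if j = i then 6 * c i else 0) + c i * 6) = 0 := by
      refine Eq.trans (Finset.sum_congr rfl fun i _ => ?_) ej
      split <;> push_cast <;> ring
    rw [Finset.sum_add_distrib, Finset.sum_ite_eq s j (fun i => 6 * c i), if_pos hj] at ej'
    have e0' : ∑ i ∈ s, c i * 6 = 0 := e0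
    rw [e0', add_zero] at ej'
    exact (mul_eq_zero.mp ej').resolve_left (by norm_num)
  exact Module.Finite.not_linearIndependent_of_infinite
    (fun i : ℕ => (⟨_, hq i⟩ : Submodule.span ℂ S))
    (hli.of_comp (Submodule.span ℂ S).subtype)

lemma coord_additive (k : ℕ) : IsAdditiveFn (fun x : ℕ →₀ ℤ => (x k : ℂ)) := by
  intro x y
  simp [Finsupp.add_apply]

lemma diffOp_FF_poly (y : ℕ →₀ ℤ) : IsPolyFn (diffOp y FF) := by
  have hrepr : diffOp y FF = ∑ k ∈ y.support,
      (((fun x : ℕ →₀ ℤ => (x k : ℂ)) + algebraMap ℂ ((ℕ →₀ ℤ) → ℂ) ((y k : ℂ))) ^ 3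
        - (fun x : ℕ →₀ ℤ => (x k : ℂ)) ^ 3) := by
    rw [diffOp_FF]
    funext x
    rw [Finset.sum_apply]
    refine Finset.sum_congr rfl fun k _ => ?_
    simp [Pi.pow_apply, Pi.sub_apply, Pi.add_apply, Algebra.algebraMap_eq_smul_one]
  rw [hrepr]
  refine Subalgebra.sum_mem _ fun k _ => ?_
  have hcoord : (fun x : ℕ →₀ ℤ => (x k : ℂ)) ∈ Algebra.adjoin ℂ
      {a : (ℕ →₀ ℤ) → ℂ | IsAdditiveFn a} :=
    Algebra.subset_adjoin (coord_additive k)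
  exact Subalgebra.sub_mem _
    (Subalgebra.pow_mem _ (Subalgebra.add_mem _ hcoord (Subalgebra.algebraMap_mem _ _)) 3)
    (Subalgebra.pow_mem _ hcoord 3)


/-- There exist an abelian group `G` and a fake polynomial `f : G → ℂ` of degree at
least three all of whose first differences are polynomials. -/
theorem exists_fakePoly_with_poly_differences :
    ∃ (G : Type) (i : AddCommGroup G) (f : G → ℂ),
      @IsGenPoly G i f ∧
      ¬ (∀ ys : List G, ys.length = 3 → ys.foldr (@diffOp G i) f = 0) ∧
      ¬ @IsPolyFn G i f ∧
      ∀ y : G, @IsPolyFn G i (@diffOp G i y f) := by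
  refine ⟨ℕ →₀ ℤ, inferInstance, FF, ⟨3, ?_⟩, third_diff_ne, FF_not_poly, diffOp_FF_poly⟩
  intro ys hys
  match ys, hys with
  | [a, b, c, d], _ => exact fourth_diff a b c d
end

section
/- Let G be an abelian group and let f : G → ℂ be a local polynomial which is not a generalized polynomial. Then for every natural number n there exists a subgroup H of G generated by two elements such that dim τ(f|_H) ≥ n + 1. -/
/-- `f` is a local polynomial: its restriction to every finitely generated subgroup
is a polynomial. -/
def IsLocalPolyFn {G : Type*} [AddCommGroup G] (f : G → ℂ) : Prop :=
  ∀ H : AddSubgroup G, H.FG → IsPolyFn (fun x : H => f x)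

namespace Aux
variable {G : Type*} [AddCommGroup G]

lemma diffOp_zero_fun (y : G) : diffOp y (0 : G → ℂ) = 0 := by
  funext x; simp [diffOp]

lemma diffOp_add (y : G) (f g : G → ℂ) : diffOp y (f + g) = diffOp y f + diffOp y g := by
  funext x; simp [diffOp]; ring

lemma diffOp_smul (y : G) (c : ℂ) (f : G → ℂ) : diffOp y (c • f) = c • diffOp y f := by
  funext x; simp [diffOp]; ring

lemma diffOp_comm (y z : G) (f : G → ℂ) : diffOp y (diffOp z f) = diffOp z (diffOp y f) := by
  funext x; simp [diffOp, add_right_comm x y z]; ring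

instance : LeftCommutative (diffOp (G := G)) := ⟨diffOp_comm⟩

/-- translation operator -/
def tr (y : G) (f : G → ℂ) : G → ℂ := fun x => f (x + y)

lemma diffOp_tr (z y : G) (f : G → ℂ) : diffOp z (tr y f) = tr y (diffOp z f) := by
  funext x; simp [diffOp, tr, add_right_comm x z y]

lemma diffOp_mul (y : G) (f g : G → ℂ) :
    diffOp y (f * g) = tr y f * diffOp y g + diffOp y f * g := by
  funext x; simp [diffOp, tr]; ring

lemma foldr_zero (ys : List G) : ys.foldr diffOp (0 : G → ℂ) = 0 := by
  induction ys with
  | nil => rfl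
  | cons y ys ih => simp [List.foldr_cons, ih, diffOp_zero_fun]

lemma foldr_add (ys : List G) (f g : G → ℂ) :
    ys.foldr diffOp (f + g) = ys.foldr diffOp f + ys.foldr diffOp g := by
  induction ys with
  | nil => rfl
  | cons y ys ih => simp [List.foldr_cons, ih, diffOp_add]

lemma foldr_tr (ys : List G) (y : G) (f : G → ℂ) :
    ys.foldr diffOp (tr y f) = tr y (ys.foldr diffOp f) := by
  induction ys with
  | nil => rfl
  | cons z ys ih => simp [List.foldr_cons, ih, diffOp_tr]

lemma foldr_perm {ys zs : List G} (h : ys.Perm zs) (f : G → ℂ) :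
    ys.foldr diffOp f = zs.foldr diffOp f :=
  h.foldr_eq f

lemma foldr_append (ys zs : List G) (f : G → ℂ) :
    (ys ++ zs).foldr diffOp f = ys.foldr diffOp (zs.foldr diffOp f) :=
  List.foldr_append ..

/-- all iterated differences of order `d` vanish -/
def DD (d : ℕ) (f : G → ℂ) : Prop :=
  ∀ ys : List G, ys.length = d → ys.foldr diffOp f = 0

lemma DD_mono {d e : ℕ} {f : G → ℂ} (h : DD d f) (hde : d ≤ e) : DD e f := by
  intro ys hlen
  have h1 : ys = ys.take (e - d) ++ ys.drop (e - d) := (List.take_append_drop _ _).symm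
  rw [h1, foldr_append, h (ys.drop (e - d)) (by simp [hlen]; omega), foldr_zero]

lemma DD_tr {d : ℕ} {f : G → ℂ} (h : DD d f) (y : G) : DD d (tr y f) := by
  intro ys hlen
  rw [foldr_tr, h ys hlen]
  funext x; simp [tr]

lemma DD_diffOp {d : ℕ} {f : G → ℂ} (h : DD (d + 1) f) (y : G) : DD d (diffOp y f) := by
  intro ys hlen
  have : ys.foldr diffOp (diffOp y f) = (ys ++ [y]).foldr diffOp f := by
    rw [foldr_append]; rfl
  rw [this, h _ (by simp [hlen])]

lemma DD_mul : ∀ (N a b : ℕ) (f g : G → ℂ), a + b ≤ N →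
    DD (a + 1) f → DD (b + 1) g → DD (a + b + 1) (f * g) := by
  intro N
  induction N with
  | zero =>
    intro a b f g hab hf hg ys hlen
    have ha : a = 0 := by omega
    have hb : b = 0 := by omega
    subst ha; subst hb
    obtain ⟨y, rfl⟩ : ∃ y, ys = [y] := by
      match ys, hlen with | [y], _ => exact ⟨y, rfl⟩
    have h1 : diffOp y g = 0 := hg [y] rfl
    have h2 : diffOp y f = 0 := hf [y] rfl
    show diffOp y (f * g) = 0
    rw [diffOp_mul, h1, h2]; funext x; simp
  | succ N ih =>
    intro a b f g hab hf hg
    rcases Nat.lt_or_ge (a + b) (N + 1) with hlt | hge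
    · exact ih a b f g (by omega) hf hg
    have habN : a + b = N + 1 := by omega
    intro ys hlen
    rcases List.eq_nil_or_concat ys with rfl | ⟨ys', y, rfl⟩
    · simp at hlen
    have hlen' : ys'.length = a + b := by simp at hlen; omega
    have hsplit : (ys' ++ [y]).foldr diffOp (f * g) = ys'.foldr diffOp (diffOp y (f * g)) := by
      rw [foldr_append]; rfl
    rw [List.concat_eq_append, hsplit, diffOp_mul, foldr_add]
    have term1 : ys'.foldr diffOp (tr y f * diffOp y g) = 0 := by
      rcases Nat.eq_zero_or_pos b with hb | hb
      · subst hb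
        have : diffOp y g = 0 := hg [y] rfl
        rw [this]
        have : tr y f * (0 : G → ℂ) = 0 := by funext x; simp
        rw [this, foldr_zero]
      · have := ih a (b - 1) (tr y f) (diffOp y g) (by omega) (DD_tr hf y)
          (by have := DD_diffOp hg y; rwa [Nat.sub_add_cancel hb])
        exact this ys' (by omega)
    have term2 : ys'.foldr diffOp (diffOp y f * g) = 0 := by
      rcases Nat.eq_zero_or_pos a with ha | ha
      · subst ha
        have : diffOp y f = 0 := hf [y] rfl
        rw [this]
        have : (0 : G → ℂ) * g = 0 := by funext x; simp
        rw [this, foldr_zero]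
      · have := ih (a - 1) b (diffOp y f) g (by omega)
          (by have := DD_diffOp hf y; rwa [Nat.sub_add_cancel ha]) hg
        exact this ys' (by omega)
    rw [term1, term2]; simp

lemma isPolyFn_DD (f : G → ℂ) (hf : IsPolyFn f) : ∃ d, DD (d + 1) f := by
  unfold IsPolyFn at hf
  induction hf using Algebra.adjoin_induction with
  | mem a ha =>
      refine ⟨1, ?_⟩; intro ys hlen
      match ys, hlen with
      | [y, z], _ =>
        show diffOp y (diffOp z a) = 0
        have h1 : diffOp z a = fun _ => a z := by
          funext x
          have := ha x z
          simp [diffOp, this]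
        rw [h1]; funext x; simp [diffOp]
  | algebraMap r =>
      refine ⟨0, ?_⟩; intro ys hlen
      match ys, hlen with
      | [y], _ =>
        show diffOp y (algebraMap ℂ (G → ℂ) r) = 0
        funext x; simp [diffOp]
  | add x y hx hy ihx ihy =>
      obtain ⟨dx, hdx⟩ := ihx; obtain ⟨dy, hdy⟩ := ihy
      refine ⟨max dx dy, fun ys hlen => ?_⟩
      rw [foldr_add, DD_mono hdx (by omega) ys hlen, DD_mono hdy (by omega) ys hlen]
      simp
  | mul x y hx hy ihx ihy =>
      obtain ⟨dx, hdx⟩ := ihx; obtain ⟨dy, hdy⟩ := ihy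
      exact ⟨dx + dy, DD_mul (dx + dy) dx dy x y le_rfl hdx hdy⟩


/-- value at 0 of the iterated difference along a list -/
noncomputable def cval (f : G → ℂ) (ys : List G) : ℂ := ys.foldr diffOp f 0

lemma c_perm {f : G → ℂ} {ys zs : List G} (h : ys.Perm zs) : cval f ys = cval f zs := by
  unfold cval; rw [foldr_perm h]

section CV
variable {f : G → ℂ} {d : ℕ}

lemma foldr_const (hd1 : ∀ ys : List G, ys.length = d + 1 → ys.foldr diffOp f = 0)
    {ys : List G} (hlen : ys.length = d) (x : G) : ys.foldr diffOp f x = cval f ys := by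
  have h0 : diffOp x (ys.foldr diffOp f) 0 = 0 := by
    have := hd1 (x :: ys) (by simp [hlen])
    exact congrFun this 0
  simp only [diffOp, zero_add, sub_eq_zero] at h0
  exact h0

lemma c_add (hd1 : ∀ ys : List G, ys.length = d + 1 → ys.foldr diffOp f = 0)
    {u v : G} {ys : List G} (hlen : ys.length + 1 = d) :
    cval f ((u + v) :: ys) = cval f (u :: ys) + cval f (v :: ys) := by
  have hzero : diffOp u (diffOp v (ys.foldr diffOp f)) = 0 := by
    have := hd1 (u :: v :: ys) (by simp; omega)
    exact this
  have key : diffOp (u + v) (ys.foldr diffOp f)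
      = diffOp u (ys.foldr diffOp f) + diffOp v (ys.foldr diffOp f) := by
    funext x
    have h := congrFun hzero x
    simp only [diffOp, Pi.add_apply, Pi.zero_apply] at h ⊢
    rw [← add_assoc]
    linear_combination h
  show diffOp (u + v) (ys.foldr diffOp f) 0 = _
  rw [key]; rfl

lemma c_zero_head {ys : List G} : cval f ((0 : G) :: ys) = 0 := by
  show diffOp 0 (ys.foldr diffOp f) 0 = 0
  simp [diffOp]

lemma c_neg (hd1 : ∀ ys : List G, ys.length = d + 1 → ys.foldr diffOp f = 0)
    {u : G} {ys : List G} (hlen : ys.length + 1 = d) :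
    cval f ((-u) :: ys) = -cval f (u :: ys) := by
  have := c_add hd1 (u := u) (v := -u) hlen
  rw [add_neg_cancel, c_zero_head] at this
  linear_combination -this

lemma c_nsmul (hd1 : ∀ ys : List G, ys.length = d + 1 → ys.foldr diffOp f = 0)
    {u : G} {ys : List G} (hlen : ys.length + 1 = d) (m : ℕ) :
    cval f ((m • u) :: ys) = (m : ℂ) * cval f (u :: ys) := by
  induction m with
  | zero => simp [c_zero_head]
  | succ m ih =>
    rw [succ_nsmul, c_add hd1 hlen, ih]
    push_cast; ring

lemma c_zsmul (hd1 : ∀ ys : List G, ys.length = d + 1 → ys.foldr diffOp f = 0)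
    {u : G} {ys : List G} (hlen : ys.length + 1 = d) (m : ℤ) :
    cval f ((m • u) :: ys) = (m : ℂ) * cval f (u :: ys) := by
  rcases m with n | n
  · rw [Int.ofNat_eq_coe, natCast_zsmul, c_nsmul hd1 hlen]
    push_cast; ring
  · rw [Int.negSucc_eq, neg_zsmul]
    have h1 : ((n : ℤ) + 1) • u = ((n + 1 : ℕ) : ℤ) • u := by push_cast; ring_nf
    rw [h1, natCast_zsmul, c_neg hd1 hlen, c_nsmul hd1 hlen]
    push_cast; ring

lemma c_rep_zsmul (hd1 : ∀ ys : List G, ys.length = d + 1 → ys.foldr diffOp f = 0)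
    {t : G} (m : ℤ) : ∀ (j : ℕ) (l : List G), j + l.length = d →
    cval f (List.replicate j (m • t) ++ l) = (m : ℂ) ^ j * cval f (List.replicate j t ++ l) := by
  intro j
  induction j with
  | zero => intro l _; simp
  | succ j ih =>
    intro l hlen
    rw [List.replicate_succ, List.cons_append,
      c_zsmul hd1 (by simp; omega),
      c_perm (List.perm_middle.symm : (t :: (List.replicate j (m • t) ++ l)).Perm _),
      ih (t :: l) (by simp at hlen ⊢; omega),
      ← c_perm (List.perm_middle.symm : (t :: (List.replicate j t ++ l)).Perm _),
      ← List.cons_append, ← List.replicate_succ]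
    ring

lemma c_binom (hd1 : ∀ ys : List G, ys.length = d + 1 → ys.foldr diffOp f = 0)
    {a b : G} : ∀ (r : ℕ) (l : List G), r + l.length = d →
    cval f (List.replicate r (a + b) ++ l)
      = ∑ j ∈ Finset.range (r + 1), (r.choose j : ℂ) *
          cval f (List.replicate j a ++ (List.replicate (r - j) b ++ l)) := by
  intro r
  induction r with
  | zero => intro l _; simp
  | succ r ih =>
    intro l hlen
    set x : ℕ → ℂ := fun i =>
      cval f (List.replicate i a ++ (List.replicate (r + 1 - i) b ++ l)) with hx
    have step1 : cval f (List.replicate (r + 1) (a + b) ++ l)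
        = cval f (List.replicate r (a + b) ++ (a :: l))
          + cval f (List.replicate r (a + b) ++ (b :: l)) := by
      rw [List.replicate_succ, List.cons_append,
        c_add hd1 (by simp at hlen ⊢; omega)]
      congr 1
      · exact c_perm (List.perm_middle.symm)
      · exact c_perm (List.perm_middle.symm)
    have terma : ∀ j, cval f (List.replicate j a ++ (List.replicate (r - j) b ++ (a :: l)))
        = x (j + 1) := by
      intro j
      have p1 : (List.replicate (r - j) b ++ a :: l).Perm
          (a :: (List.replicate (r - j) b ++ l)) := List.perm_middle
      have p2 := p1.append_left (List.replicate j a)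
      have p3 : (List.replicate j a ++ (a :: (List.replicate (r - j) b ++ l))).Perm
          (a :: (List.replicate j a ++ (List.replicate (r - j) b ++ l))) := List.perm_middle
      rw [c_perm (p2.trans p3), hx]
      simp only [Nat.succ_sub_succ]
      rw [← List.cons_append, ← List.replicate_succ]
    have termb : ∀ j, j ≤ r → cval f (List.replicate j a ++ (List.replicate (r - j) b ++ (b :: l)))
        = x j := by
      intro j hj
      have p1 : (List.replicate (r - j) b ++ b :: l).Perm
          (b :: (List.replicate (r - j) b ++ l)) := List.perm_middle
      have p2 := p1.append_left (List.replicate j a)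
      rw [c_perm p2]
      simp only [hx]
      rw [show r + 1 - j = (r - j) + 1 by omega, List.replicate_succ, List.cons_append]
    have suma : cval f (List.replicate r (a + b) ++ (a :: l))
        = ∑ j ∈ Finset.range (r + 1), (r.choose j : ℂ) * x (j + 1) := by
      rw [ih (a :: l) (by simp at hlen ⊢; omega)]
      exact Finset.sum_congr rfl fun j _ => by rw [terma j]
    have sumb : cval f (List.replicate r (a + b) ++ (b :: l))
        = ∑ j ∈ Finset.range (r + 1), (r.choose j : ℂ) * x j := by
      rw [ih (b :: l) (by simp at hlen ⊢; omega)]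
      refine Finset.sum_congr rfl fun j hj => ?_
      rw [termb j (by simpa [Nat.lt_succ_iff] using hj)]
    rw [step1, suma, sumb]
    -- Pascal recombination
    have e1 : ∑ i ∈ Finset.range (r + 2), ((r + 1).choose i : ℂ) * x i
        = x 0 + ∑ i ∈ Finset.range (r + 1), (((r + 1).choose (i + 1)) : ℂ) * x (i + 1) := by
      rw [Finset.sum_range_succ']
      simp [Nat.choose_zero_right]
      ring
    have e2 : ∑ i ∈ Finset.range (r + 1), (((r + 1).choose (i + 1)) : ℂ) * x (i + 1)
        = ∑ i ∈ Finset.range (r + 1), (r.choose i : ℂ) * x (i + 1)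
          + ∑ i ∈ Finset.range (r + 1), (r.choose (i + 1) : ℂ) * x (i + 1) := by
      rw [← Finset.sum_add_distrib]
      refine Finset.sum_congr rfl fun i _ => ?_
      rw [Nat.choose_succ_succ]
      push_cast; ring
    have e3 : ∑ i ∈ Finset.range (r + 1), (r.choose (i + 1) : ℂ) * x (i + 1)
        = ∑ i ∈ Finset.range r, (r.choose (i + 1) : ℂ) * x (i + 1) := by
      rw [Finset.sum_range_succ, Nat.choose_succ_self]
      simp
    have e4 : ∑ j ∈ Finset.range (r + 1), (r.choose j : ℂ) * x j
        = x 0 + ∑ j ∈ Finset.range r, (r.choose (j + 1) : ℂ) * x (j + 1) := by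
      rw [Finset.sum_range_succ']
      simp [Nat.choose_zero_right]
      ring
    have key : ∑ i ∈ Finset.range (r + 2), ((r + 1).choose i : ℂ) * x i
        = ∑ j ∈ Finset.range (r + 1), (r.choose j : ℂ) * x (j + 1)
          + ∑ j ∈ Finset.range (r + 1), (r.choose j : ℂ) * x j := by
      linear_combination e1 + e2 + e3 - e4
    exact key.symm

lemma c_step (hd1 : ∀ ys : List G, ys.length = d + 1 → ys.foldr diffOp f = 0)
    {k : ℕ} {ws : List G} (hlen : k + 1 + ws.length = d)
    (H0 : ∀ t' : G, cval f (List.replicate (k + 1) t' ++ ws) = 0) (t v : G) :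
    cval f (List.replicate k t ++ (v :: ws)) = 0 := by
  set b : ℕ → ℂ := fun j =>
    cval f (List.replicate j t ++ (List.replicate (k + 1 - j) v ++ ws)) with hb
  set p : Polynomial ℂ := ∑ j ∈ Finset.range (k + 2),
    Polynomial.C ((((k + 1).choose j) : ℂ) * b j) * Polynomial.X ^ j with hp
  have hroot : ∀ m : ℤ, p.eval (m : ℂ) = 0 := by
    intro m
    have hbinom := c_binom hd1 (a := m • t) (b := v) (k + 1) ws (by omega)
    have hz : cval f (List.replicate (k + 1) (m • t + v) ++ ws) = 0 := H0 _
    rw [hz] at hbinom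
    have heval : p.eval (m : ℂ) = ∑ j ∈ Finset.range (k + 2),
        (((k + 1).choose j : ℕ) : ℂ) * (((m : ℂ)) ^ j * b j) := by
      rw [hp, Polynomial.eval_finset_sum]
      refine Finset.sum_congr rfl fun j _ => ?_
      simp [Polynomial.eval_mul, Polynomial.eval_pow]
      ring
    rw [heval]
    rw [← hbinom.symm]
    refine (Finset.sum_congr rfl fun j hj => ?_).symm
    have hj' : j ≤ k + 1 := by simpa [Nat.lt_succ_iff] using hj
    rw [c_rep_zsmul hd1 m j (List.replicate (k + 1 - j) v ++ ws) (by simp; omega), hb]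
  have pz : p = 0 := by
    refine Polynomial.eq_zero_of_infinite_isRoot p ?_
    refine Set.Infinite.mono ?_ (Set.infinite_range_of_injective
      (Int.cast_injective : Function.Injective (Int.cast : ℤ → ℂ)))
    rintro z ⟨m, rfl⟩
    exact hroot m
  have hcoeff : p.coeff k = 0 := by rw [pz]; simp
  rw [hp] at hcoeff
  rw [Polynomial.finset_sum_coeff] at hcoeff
  simp only [Polynomial.coeff_C_mul, Polynomial.coeff_X_pow] at hcoeff
  rw [Finset.sum_eq_single k] at hcoeff
  · simp at hcoeff
    have hbk : b k = 0 := by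
      rcases hcoeff with h | h
      · exact absurd h (Nat.cast_add_one_ne_zero k)
      · exact h
    rw [hb] at hbk
    simpa [Nat.add_sub_cancel_left, List.replicate_one] using hbk
  · intro j _ hjk
    simp [Ne.symm hjk]
  · intro h
    exact absurd (Finset.mem_range.mpr (by omega)) h

lemma c_diag_zero (hd1 : ∀ ys : List G, ys.length = d + 1 → ys.foldr diffOp f = 0)
    (hdiag : ∀ t : G, cval f (List.replicate d t) = 0) :
    ∀ ys : List G, ys.length = d → cval f ys = 0 := by
  have main : ∀ i, i ≤ d → ∀ (t : G) (ys : List G), ys.length = i →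
      cval f (List.replicate (d - i) t ++ ys) = 0 := by
    intro i
    induction i with
    | zero =>
      intro _ t ys hys
      rw [List.length_eq_zero_iff] at hys
      subst hys
      simpa using hdiag t
    | succ i ih =>
      intro hi t ys hys
      match ys, hys with
      | v :: ws, hys =>
        have hws : ws.length = i := by simpa using hys
        refine c_step hd1 (by omega) (fun t' => ?_) t v
        have := ih (by omega) t' ws hws
        rwa [show d - (i + 1) + 1 = d - i by omega]
  intro ys hys
  have := main d le_rfl 0 ys hys
  simpa using this

lemma exists_diag (hd1 : ∀ ys : List G, ys.length = d + 1 → ys.foldr diffOp f = 0)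
    (us : List G) (hlen : us.length = d) (hne : cval f us ≠ 0) :
    ∃ t : G, cval f (List.replicate d t) ≠ 0 := by
  by_contra h
  push_neg at h
  exact hne (c_diag_zero hd1 h us hlen)

end CV

section Comp
variable {H : Type*} [AddCommGroup H]

lemma diffOp_comp (φ : H →+ G) (g : G → ℂ) (y : H) :
    diffOp y (g ∘ φ) = (diffOp (φ y) g) ∘ φ := by
  funext x; simp [diffOp, map_add]

lemma foldr_comp (φ : H →+ G) (g : G → ℂ) (ys : List H) :
    ys.foldr diffOp (g ∘ φ) = ((ys.map φ).foldr diffOp g) ∘ φ := by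
  induction ys with
  | nil => rfl
  | cons y ys ih =>
    simp only [List.foldr_cons, List.map_cons, ih, diffOp_comp]

lemma iterate_comp (φ : H →+ G) (g : G → ℂ) (y : H) (m : ℕ) :
    (diffOp y)^[m] (g ∘ φ) = ((diffOp (φ y))^[m] g) ∘ φ := by
  induction m with
  | zero => rfl
  | succ m ih => rw [Function.iterate_succ_apply', ih, Function.iterate_succ_apply', diffOp_comp]

end Comp

lemma foldr_replicate (m : ℕ) (y : G) (g : G → ℂ) :
    (List.replicate m y).foldr diffOp g = (diffOp y)^[m] g := by
  induction m with
  | zero => rfl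
  | succ m ih => rw [List.replicate_succ, List.foldr_cons, ih, Function.iterate_succ_apply']

lemma iterate_zero_fun (y : G) (m : ℕ) : (diffOp y)^[m] (0 : G → ℂ) = 0 := by
  induction m with
  | zero => rfl
  | succ m ih => rw [Function.iterate_succ_apply, diffOp_zero_fun, ih]

noncomputable def diffOpL (y : G) : (G → ℂ) →ₗ[ℂ] (G → ℂ) where
  toFun := diffOp y
  map_add' := diffOp_add y
  map_smul' := fun c g => by simpa using diffOp_smul y c g

lemma diffOpL_pow_apply (y : G) (m : ℕ) (g : G → ℂ) :
    ((diffOpL y ^ m) g) = (diffOp y)^[m] g := by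
  rw [Module.End.pow_apply]; rfl

lemma diffOp_eq_tr_sub (y : G) (g : G → ℂ) : diffOp y g = tr y g - g := by
  funext x; simp [diffOp, tr]

end Aux

/-- If a local polynomial `f` is not a generalized polynomial, then for every `n` there
is a subgroup `H` generated by two elements with `dim τ(f|_H) ≥ n + 1`. -/
theorem exists_two_generated_subgroup_of_not_genPoly
    {G : Type*} [AddCommGroup G] (f : G → ℂ)
    (hloc : IsLocalPolyFn f) (hng : ¬ IsGenPoly f) :
    ∀ n : ℕ, ∃ a b : G,
      ((n + 1 : ℕ) : Cardinal) ≤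
        Module.rank ℂ
          ↥(variety (fun x : (AddSubgroup.closure {a, b} : AddSubgroup G) => f x)) := by
  intro n
  classical
  rw [IsGenPoly] at hng
  push_neg at hng
  obtain ⟨ys0, hlen0, hne0⟩ := hng n
  obtain ⟨x0, hx0⟩ : ∃ x0, ys0.foldr diffOp f x0 ≠ 0 := by
    by_contra h
    push_neg at h
    exact hne0 (funext h)
  -- the finitely generated subgroup K
  set S : Finset G := insert x0 ys0.toFinset with hS
  set K : AddSubgroup G := AddSubgroup.closure (S : Set G) with hK
  have hKFG : K.FG := ⟨S, rfl⟩
  have hpoly := hloc K hKFG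
  set fK : K → ℂ := fun x : K => f x with hfK
  obtain ⟨d0, hd0⟩ := Aux.isPolyFn_DD fK hpoly
  -- lift the list to K
  have hysmem : ∀ y ∈ ys0, y ∈ K := fun y hy =>
    AddSubgroup.subset_closure (by simp [hS, hy])
  have hx0K : x0 ∈ K := AddSubgroup.subset_closure (by simp [hS])
  set ysK : List K := ys0.attach.map (fun y => (⟨y.1, hysmem y.1 y.2⟩ : K)) with hysK
  have hmapK : ysK.map (K.subtype) = ys0 := by
    rw [hysK, List.map_map]
    have : (⇑K.subtype ∘ fun y : {x // x ∈ ys0} => (⟨y.1, hysmem y.1 y.2⟩ : K)) = fun (y : {x // x ∈ ys0}) => (y : G) := rfl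
    rw [this]
    exact List.attach_map_subtype_val ys0
  have hlenK : ysK.length = n + 1 := by simp [hysK, hlen0]
  have hfoldK : ysK.foldr diffOp fK = (ys0.foldr diffOp f) ∘ (K.subtype) := by
    have : fK = f ∘ (K.subtype) := rfl
    rw [this, Aux.foldr_comp, hmapK]
  have hneK : ysK.foldr diffOp fK ≠ 0 := by
    intro h
    apply hx0
    have := congrFun h ⟨x0, hx0K⟩
    rwa [hfoldK] at this
  -- maximal order of a nonvanishing difference
  set P : ℕ → Prop := fun m => ∃ us : List K, us.length = m ∧ us.foldr diffOp fK ≠ 0 with hP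
  have hPbound : ∀ m, P m → m ≤ d0 := by
    rintro m ⟨us, hl, hne⟩
    by_contra hgt
    push_neg at hgt
    exact hne (Aux.DD_mono hd0 (by omega) us hl)
  have hPn : P (n + 1) := ⟨ysK, hlenK, hneK⟩
  have hnd0 : n + 1 ≤ d0 := hPbound _ hPn
  set dm : ℕ := Nat.findGreatest P d0 with hdm
  have hPdm : P dm := Nat.findGreatest_spec hnd0 hPn
  have hndm : n + 1 ≤ dm := Nat.le_findGreatest hnd0 hPn
  have hd1 : ∀ ys : List K, ys.length = dm + 1 → ys.foldr diffOp fK = 0 := by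
    intro ys hl
    by_contra hne
    have hPd : P (dm + 1) := ⟨ys, hl, hne⟩
    rcases le_or_gt (dm + 1) d0 with h | h
    · exact Nat.findGreatest_is_greatest (lt_add_one dm) h hPd
    · exact hne (Aux.DD_mono hd0 (by omega) ys hl)
  obtain ⟨us, hus_len, hus_ne⟩ := hPdm
  have hcus : Aux.cval fK us ≠ 0 := by
    obtain ⟨x, hx⟩ : ∃ x, us.foldr diffOp fK x ≠ 0 := by
      by_contra h
      push_neg at h
      exact hus_ne (funext h)
    rwa [Aux.foldr_const hd1 hus_len x] at hx
  obtain ⟨t, hct⟩ := Aux.exists_diag hd1 us hus_len hcus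
  set c0 : ℂ := Aux.cval fK (List.replicate dm t) with hc0
  have hKdm : ∀ x : K, (diffOp t)^[dm] fK x = c0 := by
    intro x
    rw [← Aux.foldr_replicate]
    exact Aux.foldr_const hd1 (by simp) x
  have hKdm1 : (diffOp t)^[dm + 1] fK = 0 := by
    rw [← Aux.foldr_replicate]
    exact hd1 _ (by simp)
  have hKgt : ∀ m, dm < m → (diffOp t)^[m] fK = 0 := by
    intro m hm
    have : m = (m - (dm + 1)) + (dm + 1) := by omega
    rw [this, Function.iterate_add_apply, hKdm1, Aux.iterate_zero_fun]
  -- the two-generated subgroup H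
  refine ⟨(t : G), (t : G), ?_⟩
  set H : AddSubgroup G := AddSubgroup.closure {(t : G), (t : G)} with hH
  have htH : (t : G) ∈ H := AddSubgroup.subset_closure (by simp)
  have hHK : H ≤ K := by
    rw [hH]
    refine (AddSubgroup.closure_le K).mpr ?_
    intro z hz
    simp at hz
    subst hz
    exact t.2
  set tH : H := ⟨(t : G), htH⟩ with htHdef
  set fH : H → ℂ := fun x : H => f x with hfH
  set ι : H →+ K := AddSubgroup.inclusion hHK with hι
  have hιt : ι tH = t := by
    apply Subtype.ext
    rfl
  have hfHι : fH = fK ∘ ι := rfl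
  have hit : ∀ m, (diffOp tH)^[m] fH = ((diffOp t)^[m] fK) ∘ ι := by
    intro m
    rw [hfHι, Aux.iterate_comp, hιt]
  have hHdm : ∀ x : H, (diffOp tH)^[dm] fH x = c0 := by
    intro x
    rw [hit dm]
    exact hKdm (ι x)
  have hHgt : ∀ m, dm < m → (diffOp tH)^[m] fH = 0 := by
    intro m hm
    rw [hit m, hKgt m hm]
    rfl
  -- span membership
  set SP : Submodule ℂ (H → ℂ) :=
    Submodule.span ℂ {g : H → ℂ | ∃ y : H, g = fun x => fH (x + y)} with hSP
  have htr : ∀ (y : H), ∀ g ∈ SP, Aux.tr y g ∈ SP := by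
    intro y g hg
    induction hg using Submodule.span_induction with
    | mem g hgm =>
      obtain ⟨z, rfl⟩ := hgm
      refine Submodule.subset_span ⟨y + z, ?_⟩
      funext x
      simp [Aux.tr, add_assoc]
    | zero =>
      have : Aux.tr y (0 : H → ℂ) = 0 := rfl
      rw [this]; exact SP.zero_mem
    | add g1 g2 _ _ ih1 ih2 =>
      have : Aux.tr y (g1 + g2) = Aux.tr y g1 + Aux.tr y g2 := rfl
      rw [this]; exact SP.add_mem ih1 ih2
    | smul a g _ ih =>
      have : Aux.tr y (a • g) = a • Aux.tr y g := rfl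
      rw [this]; exact SP.smul_mem a ih
  have hmemSP : ∀ m : ℕ, (diffOp tH)^[m] fH ∈ SP := by
    intro m
    induction m with
    | zero =>
      refine Submodule.subset_span ⟨0, ?_⟩
      funext x
      simp
    | succ m ih =>
      rw [Function.iterate_succ_apply', Aux.diffOp_eq_tr_sub]
      exact SP.sub_mem (htr tH _ ih) ih
  have hmemV : ∀ m : ℕ, (diffOp tH)^[m] fH ∈ variety fH :=
    fun m => SP.le_topologicalClosure (hmemSP m)
  -- linear independence
  set v : Fin (n + 1) → ↥(variety fH) := fun k => ⟨(diffOp tH)^[(k : ℕ)] fH, hmemV k⟩ with hv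
  have hli0 : LinearIndependent ℂ (fun k : Fin (n + 1) => (diffOp tH)^[(k : ℕ)] fH) := by
    rw [Fintype.linearIndependent_iff]
    intro gc hsum
    have key : ∀ m : ℕ, ∀ k : Fin (n + 1), (k : ℕ) = m → gc k = 0 := by
      intro m
      induction m using Nat.strong_induction_on with
      | _ m IH =>
        intro k hk
        have hm_le : m ≤ dm := by
          have := k.2
          omega
        have happ := congrArg (fun g => (Aux.diffOpL tH ^ (dm - m)) g) hsum
        simp only [map_sum, map_smul, map_zero] at happ
        have happ' : ∑ j : Fin (n + 1), gc j • (diffOp tH)^[(dm - m) + (j : ℕ)] fH = 0 := by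
          rw [← happ]
          refine Finset.sum_congr rfl fun j _ => ?_
          rw [Aux.diffOpL_pow_apply, Function.iterate_add_apply]
        have heval := congrFun happ' (0 : H)
        rw [Finset.sum_apply] at heval
        rw [Finset.sum_eq_single k] at heval
        · rw [hk] at heval
          have hdmm : dm - m + m = dm := by omega
          rw [hdmm] at heval
          simp only [Pi.smul_apply, smul_eq_mul] at heval
          rw [hHdm 0] at heval
          rcases mul_eq_zero.mp heval with h | h
          · exact h
          · exact absurd h hct
        · intro j _ hjk
          rcases lt_trichotomy (j : ℕ) m with hl | he | hg
          · rw [IH _ hl j rfl]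
            simp
          · exact absurd (Fin.ext (by rw [he, ← hk])) hjk
          · have hz : (diffOp tH)^[dm - m + (j : ℕ)] fH = 0 := hHgt _ (by omega)
            rw [hz]
            simp
        · intro h
          exact absurd (Finset.mem_univ k) h
    intro k
    exact key k k rfl
  have hli : LinearIndependent ℂ v := by
    apply LinearIndependent.of_comp ((variety fH).subtype)
    exact hli0
  have := hli.cardinal_lift_le_rank
  simpa using this
end

section
/- Let G be an abelian group, H a finitely generated subgroup of G, and f : G → ℂ a local polynomial. Then the variety τ(f|_H) of the restriction of f to H is finite dimensional; it equals the linear span of all translates of f|_H. -/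
lemma span_translates_fd {G : Type*} [AddCommGroup G] (f : G → ℂ)
    (hf : IsPolyFn f) :
    FiniteDimensional ℂ
      ↥(Submodule.span ℂ {g : G → ℂ | ∃ y : G, g = fun x => f (x + y)}) := by
  induction hf using Algebra.adjoin_induction with
  | mem a ha =>
      have : Submodule.span ℂ {g : G → ℂ | ∃ y : G, g = fun x => a (x + y)}
          ≤ Submodule.span ℂ ({a, (fun _ => 1 : G → ℂ)} : Set (G → ℂ)) := by
        rw [Submodule.span_le]
        rintro g ⟨y, rfl⟩
        have : (fun x => a (x + y)) = a + (a y) • (fun _ => 1 : G → ℂ) := by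
          funext x; simp [ha x y]
        rw [this]
        exact add_mem (Submodule.subset_span (by simp))
          (Submodule.smul_mem _ _ (Submodule.subset_span (by simp)))
      have : FiniteDimensional ℂ
          ↥(Submodule.span ℂ ({a, (fun _ => 1 : G → ℂ)} : Set (G → ℂ))) :=
        FiniteDimensional.span_of_finite ℂ (Set.toFinite _)
      exact Submodule.finiteDimensional_of_le ‹_›
  | algebraMap r =>
      have : Submodule.span ℂ
            {g : G → ℂ | ∃ y : G, g = fun x => (algebraMap ℂ (G → ℂ) r) (x + y)}
          ≤ Submodule.span ℂ ({algebraMap ℂ (G → ℂ) r} : Set (G → ℂ)) := by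
        rw [Submodule.span_le]
        rintro g ⟨y, rfl⟩
        refine Submodule.subset_span ?_
        simp only [Set.mem_singleton_iff]
        funext x
        simp [Pi.algebraMap_apply]
      have : FiniteDimensional ℂ
          ↥(Submodule.span ℂ ({algebraMap ℂ (G → ℂ) r} : Set (G → ℂ))) :=
        FiniteDimensional.span_of_finite ℂ (Set.toFinite _)
      exact Submodule.finiteDimensional_of_le ‹_›
  | add p q hp hq ihp ihq =>
      have hle : Submodule.span ℂ {g : G → ℂ | ∃ y : G, g = fun x => (p + q) (x + y)}
          ≤ Submodule.span ℂ {g : G → ℂ | ∃ y : G, g = fun x => p (x + y)}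
            ⊔ Submodule.span ℂ {g : G → ℂ | ∃ y : G, g = fun x => q (x + y)} := by
        rw [Submodule.span_le]
        rintro g ⟨y, rfl⟩
        have : (fun x => (p + q) (x + y))
            = (fun x => p (x + y)) + (fun x => q (x + y)) := rfl
        rw [this]
        exact add_mem (Submodule.mem_sup_left (Submodule.subset_span ⟨y, rfl⟩))
          (Submodule.mem_sup_right (Submodule.subset_span ⟨y, rfl⟩))
      exact Submodule.finiteDimensional_of_le hle
  | mul p q hp hq ihp ihq =>
      have hle : Submodule.span ℂ {g : G → ℂ | ∃ y : G, g = fun x => (p * q) (x + y)}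
          ≤ Submodule.span ℂ {g : G → ℂ | ∃ y : G, g = fun x => p (x + y)}
            * Submodule.span ℂ {g : G → ℂ | ∃ y : G, g = fun x => q (x + y)} := by
        rw [Submodule.span_le]
        rintro g ⟨y, rfl⟩
        have : (fun x => (p * q) (x + y))
            = (fun x => p (x + y)) * (fun x => q (x + y)) := rfl
        rw [this]
        exact Submodule.mul_mem_mul (Submodule.subset_span ⟨y, rfl⟩)
          (Submodule.subset_span ⟨y, rfl⟩)
      have hmul : (Submodule.span ℂ {g : G → ℂ | ∃ y : G, g = fun x => p (x + y)}
            * Submodule.span ℂ {g : G → ℂ | ∃ y : G, g = fun x => q (x + y)}).FG :=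
        Submodule.FG.mul ((Submodule.fg_iff_finiteDimensional _).mpr ihp)
          ((Submodule.fg_iff_finiteDimensional _).mpr ihq)
      have := (Submodule.fg_iff_finiteDimensional _).mp hmul
      exact Submodule.finiteDimensional_of_le hle

/-- For a local polynomial `f` and a finitely generated subgroup `H`, the variety
`τ(f|_H)` is finite dimensional and equals the linear span of the translates of
`f|_H`. -/
theorem variety_restriction_finiteDimensional_eq_span_translates
    {G : Type*} [AddCommGroup G] (f : G → ℂ) (hloc : IsLocalPolyFn f)
    (H : AddSubgroup G) (hH : H.FG) :
    FiniteDimensional ℂ ↥(variety (fun x : H => f x)) ∧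
      variety (fun x : H => f x) =
        Submodule.span ℂ {g : H → ℂ | ∃ y : H, g = fun x : H => f ↑(x + y)} := by
  have hf : IsPolyFn (fun x : H => f x) := hloc H hH
  have hfd := span_translates_fd (fun x : H => f x) hf
  have hclosed : IsClosed ((Submodule.span ℂ
      {g : H → ℂ | ∃ y : H, g = fun x : H => f ↑(x + y)}) : Set (H → ℂ)) :=
    Submodule.closed_of_finiteDimensional _
  have heq : variety (fun x : H => f x) =
      Submodule.span ℂ {g : H → ℂ | ∃ y : H, g = fun x : H => f ↑(x + y)} :=
    hclosed.submodule_topologicalClosure_eq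
  exact ⟨heq ▸ hfd, heq⟩
end

section
/- Let G be an abelian group and let f : G → ℂ be a polynomial, written f(x) = P(a_1(x),…,a_k(x)) with P : ℂ^k → ℂ an ordinary polynomial and a_1,…,a_k linearly independent additive functions. Then the variety τ(f) is spanned by the functions x ↦ (∂^α P)(a_1(x),…,a_k(x)), where α ranges over multi-indices with |α| ≤ deg P; consequently dim τ(f) ≤ (deg P + 1)^k. -/
/-- The iterated partial derivative `∂^α P` of a polynomial in `k` variables,
for the multi-index `α`. -/
noncomputable def pderivMulti {k : ℕ} (α : Fin k → ℕ) (P : MvPolynomial (Fin k) ℂ) :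
    MvPolynomial (Fin k) ℂ :=
  (List.finRange k).foldr (fun i Q => (MvPolynomial.pderiv i)^[α i] Q) P

namespace VarAux
open MvPolynomial Finset

open MvPolynomial Finset

variable {k : ℕ}

lemma iterate_pderiv_monomial (i : Fin k) (n : ℕ) (s : Fin k →₀ ℕ) (c : ℂ) :
    (pderiv i)^[n] (monomial s c) =
      monomial (s - Finsupp.single i n) (c * ((s i).descFactorial n : ℕ)) := by
  induction n with
  | zero => simp
  | succ n ih =>
      rw [Function.iterate_succ_apply', ih, pderiv_monomial]
      congr 1
      · rw [tsub_tsub, ← Finsupp.single_add]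
      · rw [Finsupp.tsub_apply, Finsupp.single_eq_same, Nat.descFactorial_succ]
        push_cast
        ring

lemma foldr_pderiv_monomial (α : Fin k → ℕ) (l : List (Fin k)) (hl : l.Nodup)
    (s : Fin k →₀ ℕ) (c : ℂ) :
    l.foldr (fun i Q => (pderiv i)^[α i] Q) (monomial s c) =
      monomial (s - ∑ i ∈ l.toFinset, Finsupp.single i (α i))
        (c * ∏ i ∈ l.toFinset, ((s i).descFactorial (α i) : ℂ)) := by
  induction l with
  | nil => simp
  | cons i l ih =>
      obtain ⟨hi, hl'⟩ := List.nodup_cons.1 hl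
      have hinot : i ∉ l.toFinset := fun h => hi (List.mem_toFinset.1 h)
      rw [List.foldr_cons, ih hl', iterate_pderiv_monomial]
      have hTi : (∑ j ∈ l.toFinset, Finsupp.single j (α j)) i = 0 := by
        rw [Finset.sum_apply']
        exact Finset.sum_eq_zero fun j hj =>
          Finsupp.single_eq_of_ne (by rintro rfl; exact hinot hj)
      have hsub : (s - ∑ j ∈ l.toFinset, Finsupp.single j (α j)) i = s i := by
        rw [Finsupp.tsub_apply, hTi, Nat.sub_zero]
      rw [List.toFinset_cons, Finset.sum_insert hinot, Finset.prod_insert hinot]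
      congr 1
      · rw [tsub_tsub, add_comm]
      · rw [hsub]; ring

lemma pderivMulti_monomial (α : Fin k → ℕ) (s : Fin k →₀ ℕ) (c : ℂ) :
    pderivMulti α (monomial s c) =
      monomial (s - ∑ i, Finsupp.single i (α i))
        (c * ∏ i, ((s i).descFactorial (α i) : ℂ)) := by
  rw [pderivMulti, foldr_pderiv_monomial α _ (List.nodup_finRange k), List.toFinset_finRange]


open MvPolynomial Finset

variable {k : ℕ}

lemma foldr_eq_lm (α : Fin k → ℕ) (l : List (Fin k)) (P : MvPolynomial (Fin k) ℂ) :
    l.foldr (fun i Q => (pderiv i)^[α i] Q) P =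
      (l.foldr (fun i (L : MvPolynomial (Fin k) ℂ →ₗ[ℂ] MvPolynomial (Fin k) ℂ) => ((pderiv i).toLinearMap ^ (α i)) ∘ₗ L)
        LinearMap.id) P := by
  induction l with
  | nil => rfl
  | cons i l ih =>
      rw [List.foldr_cons, List.foldr_cons, LinearMap.comp_apply, ← ih, Module.End.pow_apply]
      rfl

lemma pderivMulti_sum {ι : Type*} (α : Fin k → ℕ) (S : Finset ι)
    (F : ι → MvPolynomial (Fin k) ℂ) :
    pderivMulti α (∑ s ∈ S, F s) = ∑ s ∈ S, pderivMulti α (F s) := by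
  simp only [pderivMulti, foldr_eq_lm, map_sum]

lemma sum_single_apply (α : Fin k → ℕ) (i : Fin k) :
    (∑ j, Finsupp.single j (α j)) i = α i := by
  rw [Finset.sum_apply']
  simp [Finsupp.single_apply]

lemma eval_monomial' (u : Fin k → ℂ) (s : Fin k →₀ ℕ) (c : ℂ) :
    eval u (monomial s c) = c * ∏ i, u i ^ s i := by
  rw [eval_monomial, Finsupp.prod_fintype]
  intro i; exact pow_zero _

lemma binom (n N : ℕ) (h : n ≤ N) (x y : ℂ) :
    ∑ j ∈ range (N + 1), (n.descFactorial j : ℂ) * ((j.factorial : ℂ))⁻¹ * x ^ (n - j) * y ^ j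
      = (x + y) ^ n := by
  have step : ∀ j, (n.descFactorial j : ℂ) * ((j.factorial : ℂ))⁻¹ = (n.choose j : ℂ) := by
    intro j
    rw [Nat.descFactorial_eq_factorial_mul_choose]
    push_cast
    rw [mul_comm ((j.factorial : ℂ)) _, mul_assoc,
      mul_inv_cancel₀ (by exact_mod_cast j.factorial_ne_zero), mul_one]
  simp only [step]
  rw [← Finset.sum_subset (Finset.range_subset_range.2 (Nat.succ_le_succ h))
    (fun j _ hj => by
      rw [Nat.choose_eq_zero_of_lt (by simpa using hj)]
      simp)]
  rw [add_comm x y, add_pow]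
  exact Finset.sum_congr rfl fun j _ => by ring


lemma taylor_monomial (s : Fin k →₀ ℕ) (c : ℂ) (N : ℕ) (hs : ∀ i, s i ≤ N) (u v : Fin k → ℂ) :
    eval (u + v) (monomial s c) =
      ∑ α ∈ Fintype.piFinset (fun _ : Fin k => Finset.range (N + 1)),
        eval u (pderivMulti α (monomial s c)) * ∏ i, (v i ^ α i * ((α i).factorial : ℂ)⁻¹) := by
  have hterm : ∀ α : Fin k → ℕ,
      eval u (pderivMulti α (monomial s c)) * ∏ i, (v i ^ α i * ((α i).factorial : ℂ)⁻¹)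
        = c * ∏ i, ((s i).descFactorial (α i) : ℂ) * ((α i).factorial : ℂ)⁻¹ *
            u i ^ (s i - α i) * v i ^ α i := by
    intro α
    rw [pderivMulti_monomial, eval_monomial']
    have happ : ∀ i, (s - ∑ j, Finsupp.single j (α j)) i = s i - α i := fun i => by
      rw [Finsupp.tsub_apply, sum_single_apply]
    simp only [happ, Finset.prod_mul_distrib]
    ring
  rw [eval_monomial']
  simp only [hterm]
  rw [← Finset.mul_sum,
    ← Finset.prod_univ_sum (fun _ : Fin k => Finset.range (N + 1))
      (fun i j => ((s i).descFactorial j : ℂ) * ((j.factorial : ℂ))⁻¹ *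
        u i ^ (s i - j) * v i ^ j)]
  congr 1
  refine Finset.prod_congr rfl fun i _ => ?_
  rw [Pi.add_apply]
  exact (binom (s i) N (hs i) (u i) (v i)).symm

lemma apply_le_totalDegree {P : MvPolynomial (Fin k) ℂ} {s : Fin k →₀ ℕ}
    (hs : s ∈ P.support) (i : Fin k) : s i ≤ P.totalDegree := by
  refine le_trans ?_ (le_totalDegree hs)
  by_cases h : s i = 0
  · simp [h]
  · exact Finset.single_le_sum (f := fun j => s j) (fun _ _ => Nat.zero_le _)
      (Finsupp.mem_support_iff.2 h)

lemma taylor (P : MvPolynomial (Fin k) ℂ) (N : ℕ) (hN : P.totalDegree ≤ N)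
    (u v : Fin k → ℂ) :
    eval (u + v) P =
      ∑ α ∈ Fintype.piFinset (fun _ : Fin k => Finset.range (N + 1)),
        eval u (pderivMulti α P) * ∏ i, (v i ^ α i * ((α i).factorial : ℂ)⁻¹) := by
  conv_lhs => rw [P.as_sum]
  rw [map_sum]
  rw [show (∑ α ∈ Fintype.piFinset (fun _ : Fin k => Finset.range (N + 1)),
        eval u (pderivMulti α P) * ∏ i, (v i ^ α i * ((α i).factorial : ℂ)⁻¹))
      = ∑ α ∈ Fintype.piFinset (fun _ : Fin k => Finset.range (N + 1)),
          ∑ s ∈ P.support,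
            eval u (pderivMulti α (monomial s (coeff s P))) *
              ∏ i, (v i ^ α i * ((α i).factorial : ℂ)⁻¹) from
    Finset.sum_congr rfl fun α _ => by
      conv_lhs => rw [P.as_sum]
      rw [pderivMulti_sum, map_sum, Finset.sum_mul]]
  rw [Finset.sum_comm]
  refine Finset.sum_congr rfl fun s hs => ?_
  exact taylor_monomial s _ N (fun i => le_trans (apply_le_totalDegree hs i) hN) u v

lemma pderivMulti_eq_zero (α : Fin k → ℕ) (P : MvPolynomial (Fin k) ℂ)
    (h : P.totalDegree < ∑ i, α i) : pderivMulti α P = 0 := by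
  conv_lhs => rw [P.as_sum]
  rw [pderivMulti_sum]
  refine Finset.sum_eq_zero fun s hs => ?_
  rw [pderivMulti_monomial]
  have hex : ∃ i, s i < α i := by
    by_contra hc
    push_neg at hc
    have h1 : ∑ i, α i ≤ ∑ i, s i := Finset.sum_le_sum fun i _ => hc i
    have h2 : ∑ i, s i = s.sum fun _ e => e := by
      rw [Finsupp.sum_fintype]
      intro i; rfl
    exact absurd (le_trans h1 (h2.le.trans (le_totalDegree hs))) (not_le.2 h)
  obtain ⟨i, hi⟩ := hex
  have : ((s i).descFactorial (α i) : ℂ) = 0 := by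
    rw [Nat.descFactorial_eq_zero_iff_lt.2 hi]; simp
  rw [Finset.prod_eq_zero (Finset.mem_univ i) this, mul_zero, map_zero]

lemma span_range_eval_eq_top {ι : Type*} [Fintype ι] [DecidableEq ι] {G : Type*} [AddCommGroup G]
    (m : ι → G → ℂ) (hm : LinearIndependent ℂ m) :
    Submodule.span ℂ (Set.range fun y : G => fun j => m j y) = ⊤ := by
  by_contra hne
  obtain ⟨l, hl0, hl⟩ := Submodule.exists_dual_map_eq_bot_of_lt_top
    (lt_top_iff_ne_top.2 hne) inferInstance
  have hvan : ∀ y : G, l (fun j => m j y) = 0 := by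
    intro y
    have hmem : l (fun j => m j y) ∈ Submodule.map l
        (Submodule.span ℂ (Set.range fun y : G => fun j => m j y)) :=
      ⟨_, Submodule.subset_span ⟨y, rfl⟩, rfl⟩
    rw [hl] at hmem
    exact hmem
  have hrep : ∀ x : ι → ℂ, l x = ∑ j, x j * l (fun j' => if j = j' then 1 else 0) := by
    intro x
    rw [LinearMap.pi_apply_eq_sum_univ]
    simp_rw [smul_eq_mul]
  have hc : ∀ j, l (fun j' => if j = j' then 1 else 0) = 0 := by
    refine Fintype.linearIndependent_iff.1 hm _ ?_
    funext y
    have := hvan y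
    rw [hrep] at this
    simpa [mul_comm] using this
  apply hl0
  refine LinearMap.ext fun x => ?_
  rw [hrep]
  simp [hc]

lemma mv_eq_zero_of_int_eval : ∀ (n : ℕ) (R : MvPolynomial (Fin n) ℂ),
    (∀ t : Fin n → ℤ, eval (fun j => (t j : ℂ)) R = 0) → R = 0 := by
  intro n
  induction n with
  | zero =>
      intro R h
      apply MvPolynomial.funext
      intro x
      rw [map_zero]
      have hx : x = fun j : Fin 0 => ((0 : ℤ) : ℂ) := Subsingleton.elim _ _
      rw [hx]
      exact h _
  | succ n ih =>
      intro R h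
      have key : ∀ d, (finSuccEquiv ℂ n R).coeff d = 0 := by
        intro d
        apply ih
        intro t
        have hmap : Polynomial.map (eval fun j => (t j : ℂ)) (finSuccEquiv ℂ n R) = 0 := by
          apply Polynomial.eq_zero_of_infinite_isRoot
          refine Set.Infinite.mono ?_ (Set.infinite_range_of_injective
            (Int.cast_injective (α := ℂ)))
          rintro _ ⟨z, rfl⟩
          show Polynomial.IsRoot _ _
          rw [Polynomial.IsRoot, ← eval_eq_eval_mv_eval']
          have : (Fin.cons (z : ℂ) fun j => (t j : ℂ)) =
              fun j => ((Fin.cons z t : Fin (n + 1) → ℤ) j : ℂ) := by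
            funext j
            refine Fin.cases ?_ ?_ j <;> simp
          rw [this]
          exact h _
        have := congrArg (fun p => Polynomial.coeff p d) hmap
        simpa [Polynomial.coeff_map] using this
      have hR' : finSuccEquiv ℂ n R = 0 := Polynomial.ext fun d => by rw [key]; simp
      exact (finSuccEquiv ℂ n).injective (by rw [hR', map_zero])

lemma mv_eq_zero_of_eval_comp {G : Type*} [AddCommGroup G] {k : ℕ} (a : Fin k → G → ℂ)
    (ha : ∀ i, ∀ x y : G, a i (x + y) = a i x + a i y) (hli : LinearIndependent ℂ a)
    (Q : MvPolynomial (Fin k) ℂ) (hQ : ∀ y : G, eval (fun i => a i y) Q = 0) : Q = 0 := by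
  have hspan : Submodule.span ℂ (Set.range fun y : G => fun i => a i y) = ⊤ :=
    span_range_eval_eq_top a hli
  obtain ⟨s, hs_sub, hs_span, hs_li⟩ :=
    exists_linearIndependent ℂ (Set.range fun y : G => fun i => a i y)
  rw [hspan] at hs_span
  have hfin : s.Finite := hs_li.setFinite
  haveI := hfin.fintype
  set n := Fintype.card s with hn
  set e := Fintype.equivFin s with he
  set v : Fin n → (Fin k → ℂ) := fun j => (e.symm j : Fin k → ℂ) with hv
  have hrangev : Set.range v = s := by
    rw [hv]
    rw [show (fun j => (e.symm j : Fin k → ℂ)) = Subtype.val ∘ e.symm from rfl]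
    rw [Set.range_comp, Set.range_eq_univ.2 e.symm.surjective, Set.image_univ,
      Subtype.range_coe]
  have hy : ∀ j, ∃ y : G, (fun i => a i y) = v j := by
    intro j
    have : v j ∈ s := by rw [← hrangev]; exact ⟨j, rfl⟩
    exact hs_sub this
  choose y hyv using hy
  set g : Fin k → MvPolynomial (Fin n) ℂ := fun i => ∑ j, MvPolynomial.C (v j i) * X j with hg
  set R := bind₁ g Q with hR
  have hevalR : ∀ c : Fin n → ℂ, eval c R = eval (fun i => ∑ j, v j i * c j) Q := by
    intro c
    rw [hR]
    rw [show (eval c) ((bind₁ g) Q) = eval (fun i => eval c (g i)) Q from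
      eval₂Hom_bind₁ (RingHom.id ℂ) c g Q]
    have harg : (fun i => eval c (g i)) = fun i => ∑ j, v j i * c j := by
      funext i
      rw [hg]
      simp [eval_sum]
    rw [harg]
  have hint : ∀ t : Fin n → ℤ, eval (fun j => (t j : ℂ)) R = 0 := by
    intro t
    rw [hevalR]
    have heq : (fun i => ∑ j, v j i * (t j : ℂ)) = fun i => a i (∑ j, t j • y j) := by
      funext i
      set A : G →+ ℂ := AddMonoidHom.mk' (a i) (fun x y => ha i x y) with hA
      have : a i (∑ j, t j • y j) = A (∑ j, t j • y j) := rfl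
      rw [this, map_sum]
      refine (Finset.sum_congr rfl fun j _ => ?_).symm
      rw [map_zsmul]
      have : A (y j) = a i (y j) := rfl
      rw [this, ← hyv j]
      simp [mul_comm]
    rw [heq]
    exact hQ _
  have hR0 : R = 0 := mv_eq_zero_of_int_eval n R hint
  apply MvPolynomial.funext
  intro u
  rw [map_zero]
  have hu : u ∈ Submodule.span ℂ (Set.range v) := by
    rw [hrangev, hs_span]; trivial
  obtain ⟨c, hc⟩ := (Submodule.mem_span_range_iff_exists_fun ℂ).1 hu
  have harg : (fun i : Fin k => ∑ j, v j i * c j) = u := by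
    funext i
    rw [← hc]
    simp [Finset.sum_apply, mul_comm]
  have hue : eval u Q = eval c R := by rw [hevalR, harg]
  rw [hue, hR0, map_zero]

end VarAux

/-- For a polynomial `f = P(a_1, …, a_k)` with linearly independent additive `a_i`,
the variety `τ(f)` is spanned by the functions `x ↦ (∂^α P)(a_1(x), …, a_k(x))` with
`|α| ≤ deg P`; consequently `dim τ(f) ≤ (deg P + 1)^k`. -/
theorem variety_poly_eq_span_partials
    {G : Type*} [AddCommGroup G] (k : ℕ) (a : Fin k → G → ℂ)
    (ha : ∀ i, IsAdditiveFn (a i)) (hli : LinearIndependent ℂ a)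
    (P : MvPolynomial (Fin k) ℂ) (f : G → ℂ)
    (hf : ∀ x, f x = MvPolynomial.eval (fun i => a i x) P) :
    variety f =
        Submodule.span ℂ
          {g : G → ℂ | ∃ α : Fin k → ℕ, (∑ i, α i) ≤ P.totalDegree ∧
            g = fun x => MvPolynomial.eval (fun i => a i x) (pderivMulti α P)} ∧
      Module.rank ℂ ↥(variety f) ≤ (((P.totalDegree + 1) ^ k : ℕ) : Cardinal) := by
  classical
  set d := P.totalDegree with hd
  set gfun : (Fin k → ℕ) → G → ℂ :=
    fun α x => MvPolynomial.eval (fun i => a i x) (pderivMulti α P) with hgfun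
  set mfun : (Fin k → ℕ) → G → ℂ :=
    fun α y => ∏ i, ((a i y) ^ α i * ((α i).factorial : ℂ)⁻¹) with hmfun
  set A : Finset (Fin k → ℕ) := Fintype.piFinset (fun _ : Fin k => Finset.range (d + 1))
    with hA
  set SpanSet : Set (G → ℂ) := {g | ∃ α : Fin k → ℕ, (∑ i, α i) ≤ d ∧
    g = fun x => MvPolynomial.eval (fun i => a i x) (pderivMulti α P)} with hSpanSet
  set V : Submodule ℂ (G → ℂ) := Submodule.span ℂ {g | ∃ y : G, g = fun x => f (x + y)}
    with hV
  have hmemA : ∀ β : Fin k → ℕ, (∑ i, β i) ≤ d → β ∈ A := by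
    intro β hβ
    rw [hA]
    refine Fintype.mem_piFinset.2 fun i => Finset.mem_range.2 (Nat.lt_succ_of_le ?_)
    exact le_trans (Finset.single_le_sum (f := fun i => β i)
      (fun _ _ => Nat.zero_le _) (Finset.mem_univ i)) hβ
  have htrans : ∀ y : G, (fun x => f (x + y)) = ∑ α ∈ A, mfun α y • gfun α := by
    intro y
    funext x
    have h1 : f (x + y) = MvPolynomial.eval ((fun i => a i x) + fun i => a i y) P := by
      rw [hf]
      have harg : (fun i => a i (x + y)) = ((fun i => a i x) + fun i => a i y) := by
        funext i
        exact ha i x y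
      rw [harg]
    rw [h1, VarAux.taylor P d le_rfl _ _, Finset.sum_apply]
    refine Finset.sum_congr rfl fun α _ => ?_
    simp only [Pi.smul_apply, smul_eq_mul, hgfun, hmfun, Pi.add_apply]
    ring
  have hg0 : ∀ α : Fin k → ℕ, d < ∑ i, α i → gfun α = 0 := by
    intro α hα
    funext x
    simp [hgfun, VarAux.pderivMulti_eq_zero α P hα]
  have hVle : V ≤ Submodule.span ℂ SpanSet := by
    rw [hV]
    refine Submodule.span_le.2 ?_
    rintro g ⟨y, rfl⟩
    rw [htrans y]
    refine Submodule.sum_mem _ fun α _ => ?_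
    rcases le_or_gt (∑ i, α i) d with h | h
    · exact Submodule.smul_mem _ _ (Submodule.subset_span ⟨α, h, rfl⟩)
    · rw [hg0 α h, smul_zero]
      exact Submodule.zero_mem _
  have hmli : LinearIndependent ℂ (fun j : {β // β ∈ A} => mfun j.val) := by
    rw [Fintype.linearIndependent_iff]
    intro c hc j₀
    set Q : MvPolynomial (Fin k) ℂ := ∑ j : {β // β ∈ A},
      MvPolynomial.monomial (Finsupp.equivFunOnFinite.symm j.val)
        (c j * ∏ i, ((j.val i).factorial : ℂ)⁻¹) with hQ
    have hQ0 : Q = 0 := by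
      refine VarAux.mv_eq_zero_of_eval_comp a (fun i x y => ha i x y) hli Q ?_
      intro y
      rw [hQ, map_sum]
      have hterm : ∀ j : {β // β ∈ A},
          MvPolynomial.eval (fun i => a i y) (MvPolynomial.monomial
            (Finsupp.equivFunOnFinite.symm j.val) (c j * ∏ i, ((j.val i).factorial : ℂ)⁻¹))
          = c j * mfun j.val y := by
        intro j
        rw [VarAux.eval_monomial']
        have happ : ∀ i : Fin k, (Finsupp.equivFunOnFinite.symm j.val) i = j.val i :=
          fun i => rfl
        simp only [happ, hmfun, Finset.prod_mul_distrib]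
        ring
      rw [Finset.sum_congr rfl fun j _ => hterm j]
      have := congrFun hc y
      simpa [Finset.sum_apply] using this
    have hcoeff := congrArg (MvPolynomial.coeff (Finsupp.equivFunOnFinite.symm j₀.val)) hQ0
    rw [MvPolynomial.coeff_zero, hQ, MvPolynomial.coeff_sum] at hcoeff
    rw [Finset.sum_eq_single j₀ (fun j _ hj => by
        rw [MvPolynomial.coeff_monomial, if_neg]
        intro hcontra
        exact hj (Subtype.ext (Finsupp.equivFunOnFinite.symm.injective hcontra)))
      (fun h => absurd (Finset.mem_univ j₀) h)] at hcoeff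
    rw [MvPolynomial.coeff_monomial, if_pos rfl] at hcoeff
    have hne : (∏ i, ((j₀.val i).factorial : ℂ)⁻¹) ≠ 0 :=
      Finset.prod_ne_zero_iff.2 fun i _ =>
        inv_ne_zero (by exact_mod_cast (j₀.val i).factorial_ne_zero)
    exact (mul_eq_zero.1 hcoeff).resolve_right hne
  set L := Fintype.linearCombination ℂ (fun j : {β // β ∈ A} => gfun j.val) with hL
  set W := Submodule.comap L V with hW
  have hvecmem : ∀ y : G, (fun j : {β // β ∈ A} => mfun j.val y) ∈ W := by
    intro y
    rw [hW, Submodule.mem_comap]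
    have hLv : L (fun j => mfun j.val y) = fun x => f (x + y) := by
      rw [hL, Fintype.linearCombination_apply, htrans y]
      exact Finset.sum_coe_sort A (fun α => mfun α y • gfun α)
    rw [hLv]
    exact Submodule.subset_span ⟨y, rfl⟩
  have hWtop : W = ⊤ := by
    rw [eq_top_iff,
      ← VarAux.span_range_eval_eq_top (fun j : {β // β ∈ A} => mfun j.val) hmli]
    refine Submodule.span_le.2 ?_
    rintro _ ⟨y, rfl⟩
    exact hvecmem y
  have hgmem : ∀ α : Fin k → ℕ, α ∈ A → gfun α ∈ V := by
    intro α hαA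
    set j₀ : {β // β ∈ A} := ⟨α, hαA⟩ with hj₀
    have hsingle : Pi.single j₀ (1 : ℂ) ∈ W := by rw [hWtop]; trivial
    rw [hW, Submodule.mem_comap] at hsingle
    have hLs : L (Pi.single j₀ 1) = gfun α := by
      rw [hL, Fintype.linearCombination_apply]
      rw [Finset.sum_eq_single j₀ (fun j _ hj => by rw [Pi.single_eq_of_ne hj, zero_smul])
        (fun h => absurd (Finset.mem_univ _) h)]
      simp [hj₀]
    rw [hLs] at hsingle
    exact hsingle
  have hSle : Submodule.span ℂ SpanSet ≤ V := by
    refine Submodule.span_le.2 ?_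
    rintro g ⟨α, hαd, rfl⟩
    exact hgmem α (hmemA α hαd)
  have hsub2 : Submodule.span ℂ SpanSet ≤
      Submodule.span ℂ (Set.range fun j : {β // β ∈ A} => gfun j.val) := by
    refine Submodule.span_le.2 ?_
    rintro g ⟨α, hαd, rfl⟩
    exact Submodule.subset_span ⟨⟨α, hmemA α hαd⟩, rfl⟩
  have hfd : FiniteDimensional ℂ
      (Submodule.span ℂ (Set.range fun j : {β // β ∈ A} => gfun j.val)) :=
    FiniteDimensional.span_of_finite ℂ (Set.finite_range _)
  have hfd2 : FiniteDimensional ℂ (Submodule.span ℂ SpanSet) :=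
    Submodule.finiteDimensional_of_le hsub2
  have hclosed : IsClosed ((Submodule.span ℂ SpanSet : Submodule ℂ (G → ℂ)) : Set (G → ℂ)) :=
    Submodule.closed_of_finiteDimensional _
  have heq : variety f = Submodule.span ℂ SpanSet := by
    unfold variety
    apply le_antisymm
    · exact Submodule.topologicalClosure_minimal _ hVle hclosed
    · exact le_trans hSle (Submodule.le_topologicalClosure _)
  refine ⟨heq, ?_⟩
  rw [heq]
  have hr1 : Module.rank ℂ (Submodule.span ℂ SpanSet) ≤
      Module.rank ℂ (Submodule.span ℂ (Set.range fun j : {β // β ∈ A} => gfun j.val)) :=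
    Submodule.rank_mono hsub2
  have hr2 : Module.rank ℂ (Submodule.span ℂ
      (Set.range fun j : {β // β ∈ A} => gfun j.val)) ≤
      Cardinal.mk (Set.range fun j : {β // β ∈ A} => gfun j.val) := rank_span_le _
  have hr3 : Cardinal.mk (Set.range fun j : {β // β ∈ A} => gfun j.val) ≤
      (Fintype.card {β // β ∈ A} : Cardinal) := by
    have hrange : (Set.range fun j : {β // β ∈ A} => gfun j.val)
        = ↑(Finset.image (fun j : {β // β ∈ A} => gfun j.val) Finset.univ) := by
      ext g
      simp
    rw [hrange, Finset.coe_sort_coe, Cardinal.mk_coe_finset]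
    exact Nat.cast_le.2 (le_trans Finset.card_image_le (le_of_eq Finset.card_univ))
  have hcard : Fintype.card {β // β ∈ A} = (d + 1) ^ k := by
    rw [Fintype.card_coe, hA, Fintype.card_piFinset]
    simp
  refine le_trans hr1 (le_trans hr2 (le_trans hr3 ?_))
  rw [hcard]
end
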